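/- arXiv:1003.2710 — 2 statements merged into one kernel-verified Lean document; each statement's English description precedes it below -/
import Mathlib

section
/- Let k > 2 be an integer. The trivariate generating function W_k(x,y,w) = ∑_{s,u₁,u₂} i_k(s,u₁,u₂) x^s y^{u₁} w^{u₂} satisfies the partial differential equation ∂W_k/∂w = (x + x²) · ∂W_k/∂y, as an identity of formal power series in x, y, w (with formal partial derivatives). -/
open scoped Classical

namespace ModularDiagrams

/-- A diagram over `n` vertices: a set of arcs `(i,j)` with `1 ≤ i < j ≤ n`,
pairwise vertex-disjoint (every vertex has degree at most one). -/
def IsDiagram (n : ℕ) (A : Finset (ℕ × ℕ)) : Prop :=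
  (∀ a ∈ A, 1 ≤ a.1 ∧ a.1 < a.2 ∧ a.2 ≤ n) ∧
  (∀ a ∈ A, ∀ b ∈ A, a ≠ b →
    a.1 ≠ b.1 ∧ a.1 ≠ b.2 ∧ a.2 ≠ b.1 ∧ a.2 ≠ b.2)

/-- `A` contains a `k`-crossing: `k` distinct arcs
`(i₁,j₁),…,(i_k,j_k)` with `i₁<⋯<i_k<j₁<⋯<j_k`. -/
def HasKCrossing (k : ℕ) (A : Finset (ℕ × ℕ)) : Prop :=
  ∃ f : Fin k → ℕ × ℕ, (∀ i, f i ∈ A) ∧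
    (∀ i j : Fin k, i < j → (f i).1 < (f j).1) ∧
    (∀ i j : Fin k, i < j → (f i).2 < (f j).2) ∧
    (∀ i j : Fin k, (f i).1 < (f j).2)

/-- A `k`-noncrossing diagram over `n` vertices. -/
def IsKNoncrossing (k n : ℕ) (A : Finset (ℕ × ℕ)) : Prop :=
  IsDiagram n A ∧ ¬ HasKCrossing k A

/-- No isolated vertices among `1,…,n`. -/
def IsMatchingOn (n : ℕ) (A : Finset (ℕ × ℕ)) : Prop :=
  ∀ v : ℕ, 1 ≤ v → v ≤ n → ∃ a ∈ A, v = a.1 ∨ v = a.2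

/-- A diagram is modular if every arc has length at least four and every arc
lies in a stack of length at least two (i.e. has a parallel neighbour). -/
def IsModular (A : Finset (ℕ × ℕ)) : Prop :=
  ∀ a ∈ A, a.1 + 4 ≤ a.2 ∧ ((a.1 + 1, a.2 - 1) ∈ A ∨ (a.1 - 1, a.2 + 1) ∈ A)

/-- `Q_k(n)`: the number of modular `k`-noncrossing diagrams over `n` vertices. -/
noncomputable def Qk (k n : ℕ) : ℕ :=
  Nat.card {A : Finset (ℕ × ℕ) // IsKNoncrossing k n A ∧ IsModular A}

/-- `f_k(2n)`: the number of `k`-noncrossing matchings over `2n` vertices. -/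
noncomputable def fk (k n : ℕ) : ℕ :=
  Nat.card {A : Finset (ℕ × ℕ) // IsKNoncrossing k (2 * n) A ∧ IsMatchingOn (2 * n) A}

/-- A `V_k`-shape over `n` vertices: a `k`-noncrossing matching, all of whose
stacks have length exactly one. -/
def IsShape (k n : ℕ) (A : Finset (ℕ × ℕ)) : Prop :=
  IsKNoncrossing k n A ∧ IsMatchingOn n A ∧ ∀ a ∈ A, (a.1 + 1, a.2 - 1) ∉ A

def Is1Arc (a : ℕ × ℕ) : Prop := a.2 = a.1 + 1

def Is2Arc (a : ℕ × ℕ) : Prop := a.2 = a.1 + 2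

/-- Two arcs cross. -/
def Crosses (a b : ℕ × ℕ) : Prop :=
  (a.1 < b.1 ∧ b.1 < a.2 ∧ a.2 < b.2) ∨ (b.1 < a.1 ∧ a.1 < b.2 ∧ b.2 < a.2)

/-- The number of `1`-arcs (class `C₁`). -/
noncomputable def countC1 (A : Finset (ℕ × ℕ)) : ℕ := (A.filter Is1Arc).card

/-- The number of pairs of mutually crossing `2`-arcs (class `C₂`);
each unordered pair is counted once, via its left member. -/
noncomputable def countC2 (A : Finset (ℕ × ℕ)) : ℕ :=
  ((A ×ˢ A).filter (fun p => Is2Arc p.1 ∧ Is2Arc p.2 ∧ p.1.1 < p.2.1 ∧ Crosses p.1 p.2)).card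

/-- The number of `C₃`-elements: pairs `(α,β)` where `β` has length at least
three and `α` is the unique `2`-arc crossing `β`. -/
noncomputable def countC3 (A : Finset (ℕ × ℕ)) : ℕ :=
  (A.filter (fun b => b.1 + 3 ≤ b.2 ∧ ∃! a, a ∈ A ∧ Is2Arc a ∧ Crosses a b)).card

/-- The number of `C₄`-elements: triples `(α₁,β,α₂)` with `α₁ ≠ α₂` two
`2`-arcs both crossing `β`; counted via `β`. -/
noncomputable def countC4 (A : Finset (ℕ × ℕ)) : ℕ :=
  (A.filter (fun b => ∃ a₁ ∈ A, ∃ a₂ ∈ A, a₁ ≠ a₂ ∧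
      Is2Arc a₁ ∧ Is2Arc a₂ ∧ Crosses a₁ b ∧ Crosses a₂ b)).card

/-- `i_k(s,m)`: the number of `V_k`-shapes with `s` arcs, `m` of which are `1`-arcs. -/
noncomputable def ik2 (k s m : ℕ) : ℕ :=
  Nat.card {A : Finset (ℕ × ℕ) // IsShape k (2 * s) A ∧ A.card = s ∧ countC1 A = m}

/-- `i_k(s,u₁,u₂)`: `V_k`-shapes with `s` arcs, `u₁` `1`-arcs, `u₂` pairs of
mutually crossing `2`-arcs. -/
noncomputable def ik3 (k s u₁ u₂ : ℕ) : ℕ :=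
  Nat.card {A : Finset (ℕ × ℕ) //
    IsShape k (2 * s) A ∧ A.card = s ∧ countC1 A = u₁ ∧ countC2 A = u₂}

/-- `i_k(s,u₁,u₂,u₃,u₄)`: `V_k`-shapes with `s` arcs and `u_i` elements of class
`C_i`, `i = 1,2,3,4`.  -/
noncomputable def ik5 (k s u₁ u₂ u₃ u₄ : ℕ) : ℕ :=
  Nat.card {A : Finset (ℕ × ℕ) //
    IsShape k (2 * s) A ∧ A.card = s ∧ countC1 A = u₁ ∧ countC2 A = u₂ ∧
      countC3 A = u₃ ∧ countC4 A = u₄}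

/-- `i_k` with integer arguments, vanishing when some argument is negative. -/
noncomputable def ik5' (k : ℕ) (s u₁ u₂ u₃ u₄ : ℤ) : ℕ :=
  if 0 ≤ s ∧ 0 ≤ u₁ ∧ 0 ≤ u₂ ∧ 0 ≤ u₃ ∧ 0 ≤ u₄ then
    ik5 k s.toNat u₁.toNat u₂.toNat u₃.toNat u₄.toNat
  else 0

/-- `b` is strictly nested in `a`. -/
def Nested (a b : ℕ × ℕ) : Prop := a.1 < b.1 ∧ b.2 < a.2

/-- `b` is the successor of `a` inside a common stem of the diagram `A`:
`b` is nested in `a` and every arc of `A` nested in `a` is contained in or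
nested in (the stack of) `b`. -/
def StemStep (A : Finset (ℕ × ℕ)) (a b : ℕ × ℕ) : Prop :=
  a ∈ A ∧ b ∈ A ∧ Nested a b ∧ ∀ c ∈ A, Nested a c → b.1 ≤ c.1 ∧ c.2 ≤ b.2

/-- The outermost arcs of the stems of `A`. -/
noncomputable def stemTops (A : Finset (ℕ × ℕ)) : Finset (ℕ × ℕ) :=
  A.filter (fun b => ¬ ∃ a ∈ A, StemStep A a b)

/-- The vertices used by a set of arcs. -/
noncomputable def vertexSet (B : Finset (ℕ × ℕ)) : Finset ℕ :=
  B.image Prod.fst ∪ B.image Prod.snd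

/-- The rank (1-based) of `v` within the finite vertex set `V`. -/
noncomputable def rank (V : Finset ℕ) (v : ℕ) : ℕ := (V.filter (· ≤ v)).card

/-- The shape of a diagram: replace every stem by a single arc (its outermost
arc) and delete all isolated vertices, relabelling the remaining vertices in
increasing order. -/
noncomputable def shapeOf (A : Finset (ℕ × ℕ)) : Finset (ℕ × ℕ) :=
  (stemTops A).image
    (fun a => (rank (vertexSet (stemTops A)) a.1, rank (vertexSet (stemTops A)) a.2))

/-- The ordinary generating function `F_k(z) = ∑_{n≥0} f_k(2n) zⁿ`. -/
noncomputable def FkPS (k : ℕ) : PowerSeries ℚ := PowerSeries.mk fun n => (fk k n : ℚ)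

/-- Composition `F_k(g)` for a power series `g` with zero constant term:
the coefficient of `zⁿ` is `∑_{m=0}^{n} f_k(2m) [zⁿ] gᵐ` (higher powers of `g`
do not contribute since `g` has zero constant term). -/
noncomputable def FkComp (k : ℕ) (g : PowerSeries ℚ) : PowerSeries ℚ :=
  PowerSeries.mk fun n =>
    ∑ m ∈ Finset.range (n + 1), (fk k m : ℚ) * PowerSeries.coeff n (g ^ m)

/-- Composition `F_k(g)` for a multivariate power series `g` with zero constant
term: the coefficient of the monomial `d` is `∑_{m=0}^{|d|} f_k(2m) [d] gᵐ`. -/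
noncomputable def FkCompMv {σ : Type} (k : ℕ) (g : MvPowerSeries σ ℚ) :
    MvPowerSeries σ ℚ :=
  fun d => ∑ m ∈ Finset.range (d.sum (fun _ e => e) + 1),
    (fk k m : ℚ) * MvPowerSeries.coeff d (g ^ m)

/-- Formal partial derivative of a multivariate power series. -/
noncomputable def mvDeriv {σ : Type} (i : σ) (f : MvPowerSeries σ ℚ) :
    MvPowerSeries σ ℚ :=
  fun d => ((d i : ℚ) + 1) * MvPowerSeries.coeff (d + Finsupp.single i 1) f

end ModularDiagrams

namespace ModularDiagrams


open Finset
-- ============ new material ============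
open Finset

noncomputable def markersC2 (A : Finset (ℕ×ℕ)) : Finset ((ℕ×ℕ)×(ℕ×ℕ)) :=
  (A ×ˢ A).filter (fun p => Is2Arc p.1 ∧ Is2Arc p.2 ∧ p.1.1 < p.2.1 ∧ Crosses p.1 p.2)

lemma markersC2_card (A : Finset (ℕ×ℕ)) : (markersC2 A).card = countC2 A := rfl

noncomputable def ShapeF (k s u₁ u₂ : ℕ) : Finset (Finset (ℕ×ℕ)) :=
  ((Finset.range (2*s+1) ×ˢ Finset.range (2*s+1)).powerset).filter
    (fun A => IsShape k (2*s) A ∧ A.card = s ∧ countC1 A = u₁ ∧ countC2 A = u₂)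

lemma subset_range_of_diagram {n : ℕ} {A : Finset (ℕ×ℕ)} (h : IsDiagram n A) :
    A ⊆ Finset.range (n+1) ×ˢ Finset.range (n+1) := by
  intro a ha
  obtain ⟨h1, h2, h3⟩ := h.1 a ha
  simp only [Finset.mem_product, Finset.mem_range]
  omega

lemma mem_ShapeF {k s u₁ u₂ : ℕ} {A : Finset (ℕ×ℕ)} :
    A ∈ ShapeF k s u₁ u₂ ↔
      IsShape k (2*s) A ∧ A.card = s ∧ countC1 A = u₁ ∧ countC2 A = u₂ := by
  constructor
  · intro h; exact (Finset.mem_filter.1 h).2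
  · intro h
    exact Finset.mem_filter.2 ⟨Finset.mem_powerset.2 (subset_range_of_diagram h.1.1.1), h⟩

lemma ik3_eq_card (k s u₁ u₂ : ℕ) : ik3 k s u₁ u₂ = (ShapeF k s u₁ u₂).card := by
  have h2 : {A : Finset (ℕ×ℕ) |
      IsShape k (2*s) A ∧ A.card = s ∧ countC1 A = u₁ ∧ countC2 A = u₂} =
      ↑(ShapeF k s u₁ u₂) := by
    ext A; simp only [Set.mem_setOf_eq, Finset.coe_filter, Finset.mem_coe, mem_ShapeF]
  rw [ik3, show {A : Finset (ℕ×ℕ) //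
      IsShape k (2*s) A ∧ A.card = s ∧ countC1 A = u₁ ∧ countC2 A = u₂} =
      ↥{A : Finset (ℕ×ℕ) |
      IsShape k (2*s) A ∧ A.card = s ∧ countC1 A = u₁ ∧ countC2 A = u₂} from rfl,
    Nat.card_coe_set_eq, h2, Set.ncard_coe_finset]

noncomputable def Lset (k s u₁ u₂ : ℕ) : Finset (Σ _ : Finset (ℕ×ℕ), (ℕ×ℕ)×(ℕ×ℕ)) :=
  (ShapeF k s u₁ u₂).sigma (fun A => markersC2 A)

noncomputable def Rset (k s u₁ u₂ : ℕ) : Finset (Σ _ : Finset (ℕ×ℕ), ℕ×ℕ) :=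
  (ShapeF k s u₁ u₂).sigma (fun A => A.filter Is1Arc)

lemma Lset_card (k s u₁ u₂ : ℕ) : (Lset k s u₁ u₂).card = ik3 k s u₁ u₂ * u₂ := by
  rw [Lset, Finset.card_sigma, ik3_eq_card]
  rw [Finset.sum_congr rfl (fun A hA => ?_), Finset.sum_const, smul_eq_mul]
  rw [markersC2_card, (mem_ShapeF.1 hA).2.2.2]

lemma Rset_card (k s u₁ u₂ : ℕ) : (Rset k s u₁ u₂).card = ik3 k s u₁ u₂ * u₁ := by
  rw [Rset, Finset.card_sigma, ik3_eq_card]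
  rw [Finset.sum_congr rfl (fun A hA => ?_), Finset.sum_const, smul_eq_mul]
  exact (mem_ShapeF.1 hA).2.2.1


-- ===== small boundary lemmas =====

lemma countC2_eq_zero {A : Finset (ℕ×ℕ)} (h : A.card ≤ 1) : countC2 A = 0 := by
  rw [countC2, Finset.card_eq_zero, Finset.filter_eq_empty_iff]
  rintro ⟨a, b⟩ hab ⟨-, -, hlt, -⟩
  simp only [Finset.mem_product] at hab
  change a.1 < b.1 at hlt
  have : a = b := Finset.card_le_one.1 h a hab.1 b hab.2
  rw [this] at hlt; omega

-- ===== vertex maps =====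

def sh2 (i v : ℕ) : ℕ := if i + 4 ≤ v then v - 2 else v
def us2 (j v : ℕ) : ℕ := if j + 2 ≤ v then v + 2 else v
def sh4 (i v : ℕ) : ℕ := if i + 5 ≤ v then v - 4 else v
def us4 (j v : ℕ) : ℕ := if j + 2 ≤ v then v + 4 else v
def am2 (i : ℕ) (a : ℕ×ℕ) : ℕ×ℕ := (sh2 i a.1, sh2 i a.2)
def aum2 (j : ℕ) (a : ℕ×ℕ) : ℕ×ℕ := (us2 j a.1, us2 j a.2)
def am4 (i : ℕ) (a : ℕ×ℕ) : ℕ×ℕ := (sh4 i a.1, sh4 i a.2)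
def aum4 (j : ℕ) (a : ℕ×ℕ) : ℕ×ℕ := (us4 j a.1, us4 j a.2)

noncomputable def B1 (A : Finset (ℕ×ℕ)) (i : ℕ) : Finset (ℕ×ℕ) :=
  insert (i, i+1) ((A \ {(i,i+2),(i+1,i+3)}).image (am2 i))

noncomputable def A1 (B : Finset (ℕ×ℕ)) (j : ℕ) : Finset (ℕ×ℕ) :=
  insert (j, j+2) (insert (j+1, j+3) ((B \ {(j,j+1)}).image (aum2 j)))

noncomputable def B2 (A : Finset (ℕ×ℕ)) (i : ℕ) : Finset (ℕ×ℕ) :=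
  insert (i-1, i) ((A \ {(i,i+2),(i+1,i+3),(i-1,i+4)}).image (am4 i))

noncomputable def A2 (B : Finset (ℕ×ℕ)) (j : ℕ) : Finset (ℕ×ℕ) :=
  insert (j, j+5) (insert (j+1, j+3) (insert (j+2, j+4)
    ((B \ {(j,j+1)}).image (aum4 j))))

noncomputable def col1 (x : Σ _ : Finset (ℕ×ℕ), (ℕ×ℕ)×(ℕ×ℕ)) :
    Σ _ : Finset (ℕ×ℕ), ℕ×ℕ :=
  ⟨B1 x.1 x.2.1.1, (x.2.1.1, x.2.1.1+1)⟩

noncomputable def exp1 (y : Σ _ : Finset (ℕ×ℕ), ℕ×ℕ) :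
    Σ _ : Finset (ℕ×ℕ), (ℕ×ℕ)×(ℕ×ℕ) :=
  ⟨A1 y.1 y.2.1, ((y.2.1, y.2.1+2), (y.2.1+1, y.2.1+3))⟩

noncomputable def col2 (x : Σ _ : Finset (ℕ×ℕ), (ℕ×ℕ)×(ℕ×ℕ)) :
    Σ _ : Finset (ℕ×ℕ), ℕ×ℕ :=
  ⟨B2 x.1 x.2.1.1, (x.2.1.1 - 1, x.2.1.1)⟩

noncomputable def exp2 (y : Σ _ : Finset (ℕ×ℕ), ℕ×ℕ) :
    Σ _ : Finset (ℕ×ℕ), (ℕ×ℕ)×(ℕ×ℕ) :=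
  ⟨A2 y.1 y.2.1, ((y.2.1+1, y.2.1+3), (y.2.1+2, y.2.1+4))⟩

-- ===== generic helpers =====

lemma mem_markersC2 {A : Finset (ℕ×ℕ)} {p : (ℕ×ℕ)×(ℕ×ℕ)} :
    p ∈ markersC2 A ↔ p.1 ∈ A ∧ p.2 ∈ A ∧ Is2Arc p.1 ∧ Is2Arc p.2 ∧
      p.1.1 < p.2.1 ∧ Crosses p.1 p.2 := by
  rw [markersC2, Finset.mem_filter, Finset.mem_product]
  tauto

lemma marker_eq {A : Finset (ℕ×ℕ)} {p : (ℕ×ℕ)×(ℕ×ℕ)} (h : p ∈ markersC2 A) :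
    p.1 = (p.1.1, p.1.1+2) ∧ p.2 = (p.1.1+1, p.1.1+3) ∧
      (p.1.1, p.1.1+2) ∈ A ∧ (p.1.1+1, p.1.1+3) ∈ A := by
  obtain ⟨h1, h2, h3, h4, h5, h6⟩ := mem_markersC2.1 h
  rw [Is2Arc] at h3 h4
  have h7 : p.2.1 = p.1.1 + 1 := by
    rcases h6 with ⟨a, b, c⟩ | ⟨a, b, c⟩ <;> omega
  have e1 : p.1 = (p.1.1, p.1.1+2) := by
    rw [Prod.ext_iff]; exact ⟨rfl, h3⟩
  have e2 : p.2 = (p.1.1+1, p.1.1+3) := by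
    rw [Prod.ext_iff]; constructor
    · exact h7
    · show p.2.2 = _; omega
  refine ⟨e1, e2, ?_, ?_⟩
  · rw [← e1]; exact h1
  · rw [← e2]; exact h2

lemma vertex_eq {n : ℕ} {A : Finset (ℕ×ℕ)} (hd : IsDiagram n A) {c c' : ℕ×ℕ}
    (hc : c ∈ A) (hc' : c' ∈ A)
    (h : c.1 = c'.1 ∨ c.1 = c'.2 ∨ c.2 = c'.1 ∨ c.2 = c'.2) : c = c' := by
  by_contra hne
  have := hd.2 c hc c' hc' hne
  tauto

-- two distinct further indices in `Fin k`, `2 < k`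
lemma fin_two_other {k : ℕ} (hk : 2 < k) (t : Fin k) :
    ∃ t₁ t₂ : Fin k, t₁ ≠ t ∧ t₂ ≠ t ∧ t₁ < t₂ := by
  rcases t with ⟨tv, htv⟩
  by_cases h0 : tv = 0
  · exact ⟨⟨1, by omega⟩, ⟨2, by omega⟩, by simp [Fin.ext_iff]; omega,
      by simp [Fin.ext_iff]; omega, by simp [Fin.lt_def]⟩
  by_cases h1 : tv = 1
  · exact ⟨⟨0, by omega⟩, ⟨2, by omega⟩, by simp [Fin.ext_iff]; omega,
      by simp [Fin.ext_iff]; omega, by simp [Fin.lt_def]⟩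
  · exact ⟨⟨0, by omega⟩, ⟨1, by omega⟩, by simp [Fin.ext_iff]; omega,
      by simp [Fin.ext_iff]; omega, by simp [Fin.lt_def]⟩


-- ===== membership characterizations =====

lemma mem_B1 {A : Finset (ℕ×ℕ)} {i : ℕ} {c : ℕ×ℕ} :
    c ∈ B1 A i ↔ c = (i,i+1) ∨
      ∃ c₀, c₀ ∈ A ∧ c₀ ≠ (i,i+2) ∧ c₀ ≠ (i+1,i+3) ∧ c = am2 i c₀ := by
  simp only [B1, Finset.mem_insert, Finset.mem_image, Finset.mem_sdiff,
    Finset.mem_singleton, not_or]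
  constructor
  · rintro (h | ⟨c₀, ⟨hc₀, hne1, hne2⟩, rfl⟩)
    · exact Or.inl h
    · exact Or.inr ⟨c₀, hc₀, hne1, hne2, rfl⟩
  · rintro (h | ⟨c₀, hc₀, hne1, hne2, rfl⟩)
    · exact Or.inl h
    · exact Or.inr ⟨c₀, ⟨hc₀, hne1, hne2⟩, rfl⟩

lemma mem_A1 {B : Finset (ℕ×ℕ)} {j : ℕ} {c : ℕ×ℕ} :
    c ∈ A1 B j ↔ c = (j,j+2) ∨ c = (j+1,j+3) ∨
      ∃ c₀, c₀ ∈ B ∧ c₀ ≠ (j,j+1) ∧ c = aum2 j c₀ := by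
  simp only [A1, Finset.mem_insert, Finset.mem_image, Finset.mem_sdiff,
    Finset.mem_singleton]
  constructor
  · rintro (h | h | ⟨c₀, ⟨hc₀, hne⟩, rfl⟩)
    · exact Or.inl h
    · exact Or.inr (Or.inl h)
    · exact Or.inr (Or.inr ⟨c₀, hc₀, hne, rfl⟩)
  · rintro (h | h | ⟨c₀, hc₀, hne, rfl⟩)
    · exact Or.inl h
    · exact Or.inr (Or.inl h)
    · exact Or.inr (Or.inr ⟨c₀, ⟨hc₀, hne⟩, rfl⟩)

lemma mem_B2 {A : Finset (ℕ×ℕ)} {i : ℕ} {c : ℕ×ℕ} :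
    c ∈ B2 A i ↔ c = (i-1,i) ∨
      ∃ c₀, c₀ ∈ A ∧ c₀ ≠ (i,i+2) ∧ c₀ ≠ (i+1,i+3) ∧ c₀ ≠ (i-1,i+4) ∧
        c = am4 i c₀ := by
  simp only [B2, Finset.mem_insert, Finset.mem_image, Finset.mem_sdiff,
    Finset.mem_singleton, not_or]
  constructor
  · rintro (h | ⟨c₀, ⟨hc₀, hne1, hne2, hne3⟩, rfl⟩)
    · exact Or.inl h
    · exact Or.inr ⟨c₀, hc₀, hne1, hne2, hne3, rfl⟩
  · rintro (h | ⟨c₀, hc₀, hne1, hne2, hne3, rfl⟩)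
    · exact Or.inl h
    · exact Or.inr ⟨c₀, ⟨hc₀, hne1, hne2, hne3⟩, rfl⟩

lemma mem_A2 {B : Finset (ℕ×ℕ)} {j : ℕ} {c : ℕ×ℕ} :
    c ∈ A2 B j ↔ c = (j,j+5) ∨ c = (j+1,j+3) ∨ c = (j+2,j+4) ∨
      ∃ c₀, c₀ ∈ B ∧ c₀ ≠ (j,j+1) ∧ c = aum4 j c₀ := by
  simp only [A2, Finset.mem_insert, Finset.mem_image, Finset.mem_sdiff,
    Finset.mem_singleton]
  constructor
  · rintro (h | h | h | ⟨c₀, ⟨hc₀, hne⟩, rfl⟩)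
    · exact Or.inl h
    · exact Or.inr (Or.inl h)
    · exact Or.inr (Or.inr (Or.inl h))
    · exact Or.inr (Or.inr (Or.inr ⟨c₀, hc₀, hne, rfl⟩))
  · rintro (h | h | h | ⟨c₀, hc₀, hne, rfl⟩)
    · exact Or.inl h
    · exact Or.inr (Or.inl h)
    · exact Or.inr (Or.inr (Or.inl h))
    · exact Or.inr (Or.inr (Or.inr ⟨c₀, ⟨hc₀, hne⟩, rfl⟩))

-- ===== freeness =====

lemma free1 {n i : ℕ} {A : Finset (ℕ×ℕ)} (hd : IsDiagram n A)
    (hα : (i,i+2) ∈ A) (hβ : (i+1,i+3) ∈ A) {c : ℕ×ℕ} (hc : c ∈ A)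
    (h1 : c ≠ (i,i+2)) (h2 : c ≠ (i+1,i+3)) :
    (c.1 < i ∨ i+3 < c.1) ∧ (c.2 < i ∨ i+3 < c.2) := by
  have u := hd.2 c hc _ hα h1
  have v := hd.2 c hc _ hβ h2
  have u1 : c.1 ≠ i := u.1
  have u2 : c.1 ≠ i+2 := u.2.1
  have u3 : c.2 ≠ i := u.2.2.1
  have u4 : c.2 ≠ i+2 := u.2.2.2
  have v1 : c.1 ≠ i+1 := v.1
  have v2 : c.1 ≠ i+3 := v.2.1
  have v3 : c.2 ≠ i+1 := v.2.2.1
  have v4 : c.2 ≠ i+3 := v.2.2.2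
  omega

lemma free1' {n j : ℕ} {B : Finset (ℕ×ℕ)} (hd : IsDiagram n B)
    (h1arc : (j,j+1) ∈ B) {c : ℕ×ℕ} (hc : c ∈ B) (h1 : c ≠ (j,j+1)) :
    (c.1 < j ∨ j+1 < c.1) ∧ (c.2 < j ∨ j+1 < c.2) := by
  have u := hd.2 c hc _ h1arc h1
  have u1 : c.1 ≠ j := u.1
  have u2 : c.1 ≠ j+1 := u.2.1
  have u3 : c.2 ≠ j := u.2.2.1
  have u4 : c.2 ≠ j+1 := u.2.2.2
  omega

lemma free2 {n i : ℕ} {A : Finset (ℕ×ℕ)} (hd : IsDiagram n A)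
    (hα : (i,i+2) ∈ A) (hβ : (i+1,i+3) ∈ A) (hγ : (i-1,i+4) ∈ A) {c : ℕ×ℕ}
    (hc : c ∈ A) (h1 : c ≠ (i,i+2)) (h2 : c ≠ (i+1,i+3)) (h3 : c ≠ (i-1,i+4)) :
    (c.1 < i-1 ∨ i+4 < c.1) ∧ (c.2 < i-1 ∨ i+4 < c.2) := by
  have hi : 1 ≤ i-1 := (hd.1 _ hγ).1
  have u := free1 hd hα hβ hc h1 h2
  have v := hd.2 c hc _ hγ h3
  have v1 : c.1 ≠ i-1 := v.1
  have v2 : c.1 ≠ i+4 := v.2.1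
  have v3 : c.2 ≠ i-1 := v.2.2.1
  have v4 : c.2 ≠ i+4 := v.2.2.2
  omega

lemma marker_ne_parts {n i : ℕ} {A : Finset (ℕ×ℕ)} (hd : IsDiagram n A)
    (hα : (i,i+2) ∈ A) (hβ : (i+1,i+3) ∈ A) {q : (ℕ×ℕ)×(ℕ×ℕ)}
    (hqm : q ∈ markersC2 A) (hqne : q ≠ ((i,i+2),(i+1,i+3))) :
    q.1 ≠ (i,i+2) ∧ q.1 ≠ (i+1,i+3) ∧ q.2 ≠ (i,i+2) ∧ q.2 ≠ (i+1,i+3) := by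
  obtain ⟨e1, e2, hq1A, hq2A⟩ := marker_eq hqm
  have hi : 1 ≤ i := (hd.1 _ hα).1
  set x := q.1.1 with hx
  have hxi : x ≠ i := by
    rintro h
    apply hqne
    rw [Prod.ext_iff]
    constructor
    · rw [e1, h]
    · rw [e2, h]
  refine ⟨?_, ?_, ?_, ?_⟩
  · intro h
    exact hxi (congrArg Prod.fst (e1 ▸ h : (x, x+2) = (i,i+2)))
  · intro h
    have hx1 : x = i+1 := congrArg Prod.fst (e1 ▸ h : (x, x+2) = (i+1,i+3))
    have hq2A' : q.2 ∈ A := by rw [e2]; exact hq2A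
    have h22 : q.2 = (i,i+2) := vertex_eq hd hq2A' hα (by
      rw [e2]
      right; left
      show x+1 = i+2
      omega)
    have h1 : q.2.1 = i := congrArg Prod.fst h22
    have h2 : q.2.1 = x+1 := congrArg Prod.fst e2
    omega
  · intro h
    have hx1 : x+1 = i := congrArg Prod.fst (e2 ▸ h : (x+1, x+3) = (i,i+2))
    have hq1A' : q.1 ∈ A := by rw [e1]; exact hq1A
    have h11 : q.1 = (i+1,i+3) := vertex_eq hd hq1A' hβ (by
      rw [e1]
      right; right; left
      show x+2 = i+1
      omega)
    have h1 : q.1.1 = i+1 := congrArg Prod.fst h11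
    omega
  · intro h
    have hx1 : x+1 = i+1 := congrArg Prod.fst (e2 ▸ h : (x+1, x+3) = (i+1,i+3))
    exact hxi (by omega)



lemma sh2_reflect_lt {i u v : ℕ} (hu : u < i ∨ i+3 < u) (hv : v < i ∨ i+3 < v)
    (h : sh2 i u < sh2 i v) : u < v := by
  simp only [sh2] at h; split_ifs at h <;> omega

lemma col1_mem {k s u₁ u₂ : ℕ} (hk : 2 < k) {A : Finset (ℕ×ℕ)} {i : ℕ}
    (hA : A ∈ ShapeF k (s+2) u₁ (u₂+1))
    (hα : (i, i+2) ∈ A) (hβ : (i+1, i+3) ∈ A) (hγ : (i-1, i+4) ∉ A) :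
    B1 A i ∈ ShapeF k (s+1) (u₁+1) u₂ := by
  obtain ⟨⟨⟨hd, hnc⟩, hmat, hstk⟩, hcard, hc1, hc2⟩ := mem_ShapeF.1 hA
  have hfree : ∀ {c : ℕ×ℕ}, c ∈ A → c ≠ (i,i+2) → c ≠ (i+1,i+3) →
      (c.1 < i ∨ i+3 < c.1) ∧ (c.2 < i ∨ i+3 < c.2) :=
    fun hc h1 h2 => free1 hd hα hβ hc h1 h2
  have hi1 : 1 ≤ i := (hd.1 _ hα).1
  have hi3 : i+3 ≤ 2*(s+2) := (hd.1 _ hβ).2.2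
  -- the diagram property
  have hdiagB : IsDiagram (2*(s+1)) (B1 A i) := by
    constructor
    · intro a ha
      rcases mem_B1.1 ha with rfl | ⟨c₀, hc₀, h1, h2, rfl⟩
      · refine ⟨hi1, by omega, by omega⟩
      · have hb := hd.1 c₀ hc₀
        have hf := hfree hc₀ h1 h2
        simp only [am2, sh2]
        split_ifs <;> omega
    · intro a ha b hb hab
      rcases mem_B1.1 ha with rfl | ⟨c₀, hc₀, h1, h2, rfl⟩ <;>
        rcases mem_B1.1 hb with rfl | ⟨c₁, hc₁, g1, g2, rfl⟩
      · exact absurd rfl hab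
      · have hf := hfree hc₁ g1 g2
        simp only [am2, sh2]
        split_ifs <;> refine ⟨by omega, by omega, by omega, by omega⟩
      · have hf := hfree hc₀ h1 h2
        simp only [am2, sh2]
        split_ifs <;> refine ⟨by omega, by omega, by omega, by omega⟩
      · have hf := hfree hc₀ h1 h2
        have hg := hfree hc₁ g1 g2
        have hne : c₀ ≠ c₁ := by rintro rfl; exact hab rfl
        have hd2 := hd.2 c₀ hc₀ c₁ hc₁ hne
        obtain ⟨w1, w2, w3, w4⟩ := hd2
        simp only [am2, sh2]
        split_ifs <;> refine ⟨by omega, by omega, by omega, by omega⟩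
  -- noncrossing
  have hncB : ¬ HasKCrossing k (B1 A i) := by
    intro hB
    apply hnc
    obtain ⟨f, hfA, hf1, hf2, hf3⟩ := hB
    have hne1arc : ∀ t, f t ≠ (i, i+1) := by
      intro t ht
      obtain ⟨t₁, t₂, hne₁, hne₂, hlt⟩ := fin_two_other hk t
      rcases lt_or_gt_of_ne hne₁ with h | h
      · have a1 := hf2 t₁ t h
        have a3 := hf3 t t₁
        rw [ht] at a1 a3
        have a1' : (f t₁).2 < i+1 := a1
        have a3' : i < (f t₁).2 := a3
        omega
      · have a1 := hf1 t t₁ h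
        have a3 := hf3 t₁ t
        rw [ht] at a1 a3
        have a1' : i < (f t₁).1 := a1
        have a3' : (f t₁).1 < i+1 := a3
        omega
    have hold : ∀ t, ∃ c₀, c₀ ∈ A ∧ c₀ ≠ (i,i+2) ∧ c₀ ≠ (i+1,i+3) ∧
        f t = am2 i c₀ := by
      intro t
      rcases mem_B1.1 (hfA t) with h | h
      · exact absurd h (hne1arc t)
      · exact h
    choose g hg1 hg2 hg3 hg4 using hold
    refine ⟨g, hg1, ?_, ?_, ?_⟩
    · intro a b hab
      have h := hf1 a b hab
      rw [hg4 a, hg4 b] at h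
      exact sh2_reflect_lt (hfree (hg1 a) (hg2 a) (hg3 a)).1
        (hfree (hg1 b) (hg2 b) (hg3 b)).1 h
    · intro a b hab
      have h := hf2 a b hab
      rw [hg4 a, hg4 b] at h
      exact sh2_reflect_lt (hfree (hg1 a) (hg2 a) (hg3 a)).2
        (hfree (hg1 b) (hg2 b) (hg3 b)).2 h
    · intro a b
      have h := hf3 a b
      rw [hg4 a, hg4 b] at h
      exact sh2_reflect_lt (hfree (hg1 a) (hg2 a) (hg3 a)).1
        (hfree (hg1 b) (hg2 b) (hg3 b)).2 h
  -- matching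
  have hmatB : IsMatchingOn (2*(s+1)) (B1 A i) := by
    intro v hv1 hv2
    rcases Nat.lt_or_ge v i with hv | hv
    · obtain ⟨a, haA, hva⟩ := hmat v hv1 (by omega)
      have hne1 : a ≠ (i,i+2) := by
        rintro rfl
        have hva' : v = i ∨ v = i+2 := hva
        omega
      have hne2 : a ≠ (i+1,i+3) := by
        rintro rfl
        have hva' : v = i+1 ∨ v = i+3 := hva
        omega
      refine ⟨am2 i a, mem_B1.2 (Or.inr ⟨a, haA, hne1, hne2, rfl⟩), ?_⟩
      have hf := hfree haA hne1 hne2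
      have hva' : v = a.1 ∨ v = a.2 := hva
      show v = sh2 i a.1 ∨ v = sh2 i a.2
      simp only [sh2]; split_ifs <;> omega
    · rcases Nat.lt_or_ge (i+1) v with hv' | hv'
      · obtain ⟨a, haA, hva⟩ := hmat (v+2) (by omega) (by omega)
        have hva' : v+2 = a.1 ∨ v+2 = a.2 := hva
        have hne1 : a ≠ (i,i+2) := by
          rintro rfl
          have : v+2 = i ∨ v+2 = i+2 := hva
          omega
        have hne2 : a ≠ (i+1,i+3) := by
          rintro rfl
          have : v+2 = i+1 ∨ v+2 = i+3 := hva
          omega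
        refine ⟨am2 i a, mem_B1.2 (Or.inr ⟨a, haA, hne1, hne2, rfl⟩), ?_⟩
        have hf := hfree haA hne1 hne2
        show v = sh2 i a.1 ∨ v = sh2 i a.2
        simp only [sh2]; split_ifs <;> omega
      · exact ⟨(i,i+1), mem_B1.2 (Or.inl rfl), show v = i ∨ v = i+1 by omega⟩
  -- stack-free
  have hstkB : ∀ a ∈ B1 A i, (a.1+1, a.2-1) ∉ B1 A i := by
    intro a ha hcon
    rcases mem_B1.1 ha with rfl | ⟨c₀, hc₀, h1, h2, rfl⟩
    · rcases mem_B1.1 hcon with hii | ⟨c₁, hc₁, g1, g2, heq⟩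
      · have : i+1 = i := congrArg Prod.fst hii
        omega
      · have hf := hfree hc₁ g1 g2
        have e1 : i+1 = sh2 i c₁.1 := congrArg Prod.fst heq
        simp only [sh2] at e1; split_ifs at e1 <;> omega
    · rcases mem_B1.1 hcon with heq | ⟨c₁, hc₁, g1, g2, heq⟩
      · have hf := hfree hc₀ h1 h2
        have hb := hd.1 c₀ hc₀
        have e1 : sh2 i c₀.1 + 1 = i := congrArg Prod.fst heq
        have e2 : sh2 i c₀.2 - 1 = i+1 := congrArg Prod.snd heq
        have k1 : c₀.1 = i-1 := by
          simp only [sh2] at e1; split_ifs at e1 <;> omega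
        have k2 : c₀.2 = i+4 := by
          simp only [sh2] at e2; split_ifs at e2 <;> omega
        have : c₀ = (i-1, i+4) := Prod.ext_iff.2 ⟨k1, k2⟩
        exact hγ (this ▸ hc₀)
      · have hf := hfree hc₀ h1 h2
        have hg := hfree hc₁ g1 g2
        have hb := hd.1 c₀ hc₀
        have hb' := hd.1 c₁ hc₁
        have e1 : sh2 i c₀.1 + 1 = sh2 i c₁.1 := congrArg Prod.fst heq
        have e2 : sh2 i c₀.2 - 1 = sh2 i c₁.2 := congrArg Prod.snd heq
        have k1 : c₁.1 = c₀.1 + 1 := by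
          simp only [sh2] at e1; split_ifs at e1 <;> omega
        have k2 : c₁.2 = c₀.2 - 1 := by
          simp only [sh2] at e2; split_ifs at e2 <;> omega
        exact hstk c₀ hc₀ (show (c₀.1+1, c₀.2-1) ∈ A from
          (Prod.ext_iff.2 ⟨k1.symm, k2.symm⟩ : (c₀.1+1, c₀.2-1) = c₁) ▸ hc₁)
  -- cardinality
  have hnotmem : (i, i+1) ∉ (A \ {(i,i+2),(i+1,i+3)}).image (am2 i) := by
    rw [Finset.mem_image]; rintro ⟨c₀, hc₀, heq⟩
    rw [Finset.mem_sdiff, Finset.mem_insert, Finset.mem_singleton, not_or] at hc₀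
    have hf := hfree hc₀.1 hc₀.2.1 hc₀.2.2
    have e1 : sh2 i c₀.1 = i := congrArg Prod.fst heq
    simp only [sh2] at e1; split_ifs at e1 <;> omega
  have hsub : ({(i,i+2),(i+1,i+3)} : Finset (ℕ×ℕ)) ⊆ A := by
    intro x hx; rw [Finset.mem_insert, Finset.mem_singleton] at hx
    rcases hx with rfl | rfl
    · exact hα
    · exact hβ
  have hinjOn : Set.InjOn (am2 i) ↑(A \ {(i,i+2),(i+1,i+3)}) := by
    intro x hx y hy hxy
    rw [Finset.mem_coe, Finset.mem_sdiff, Finset.mem_insert, Finset.mem_singleton,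
      not_or] at hx hy
    have hf := hfree hx.1 hx.2.1 hx.2.2
    have hg := hfree hy.1 hy.2.1 hy.2.2
    have e1 : sh2 i x.1 = sh2 i y.1 := congrArg Prod.fst hxy
    have e2 : sh2 i x.2 = sh2 i y.2 := congrArg Prod.snd hxy
    refine Prod.ext_iff.2 ⟨?_, ?_⟩
    · simp only [sh2] at e1; split_ifs at e1 <;> omega
    · simp only [sh2] at e2; split_ifs at e2 <;> omega
  have hpair2 : ({(i,i+2),(i+1,i+3)} : Finset (ℕ×ℕ)).card = 2 := by
    rw [Finset.card_insert_of_notMem, Finset.card_singleton]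
    rw [Finset.mem_singleton]
    intro h
    have : i = i+1 := congrArg Prod.fst h
    omega
  have hcardB : (B1 A i).card = s+1 := by
    rw [B1, Finset.card_insert_of_notMem hnotmem, Finset.card_image_of_injOn hinjOn,
      Finset.card_sdiff_of_subset hsub, hpair2, hcard]
    omega
  -- countC1
  have hC1 : (B1 A i).filter Is1Arc =
      insert (i,i+1) (((A \ {(i,i+2),(i+1,i+3)}).filter Is1Arc).image (am2 i)) := by
    ext c
    simp only [Finset.mem_filter, Finset.mem_insert, Finset.mem_image]
    constructor
    · rintro ⟨hc, h1a⟩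
      rcases mem_B1.1 hc with rfl | ⟨c₀, hc₀, h1, h2, rfl⟩
      · exact Or.inl rfl
      · right
        have hf := hfree hc₀ h1 h2
        have hb := hd.1 c₀ hc₀
        have h1a' : sh2 i c₀.2 = sh2 i c₀.1 + 1 := h1a
        have hone : c₀.2 = c₀.1 + 1 := by
          simp only [sh2] at h1a'; split_ifs at h1a' <;> omega
        refine ⟨c₀, ⟨Finset.mem_sdiff.2 ⟨hc₀, ?_⟩, hone⟩, rfl⟩
        rw [Finset.mem_insert, Finset.mem_singleton]
        rintro (rfl | rfl)
        · exact absurd rfl h1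
        · exact absurd rfl h2
    · rintro (rfl | ⟨c₀, hc₀f, rfl⟩)
      · exact ⟨mem_B1.2 (Or.inl rfl), rfl⟩
      · obtain ⟨hc₀s, h1a⟩ := hc₀f
        obtain ⟨hc₀, hne⟩ := Finset.mem_sdiff.1 hc₀s
        rw [Finset.mem_insert, Finset.mem_singleton, not_or] at hne
        have hf := hfree hc₀ hne.1 hne.2
        refine ⟨mem_B1.2 (Or.inr ⟨c₀, hc₀, hne.1, hne.2, rfl⟩), ?_⟩
        show sh2 i c₀.2 = sh2 i c₀.1 + 1
        have h1a' : c₀.2 = c₀.1 + 1 := h1a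
        simp only [sh2]; split_ifs <;> omega
  have hfilter_eq : (A \ {(i,i+2),(i+1,i+3)}).filter Is1Arc = A.filter Is1Arc := by
    ext c
    simp only [Finset.mem_filter, Finset.mem_sdiff, Finset.mem_insert,
      Finset.mem_singleton, not_or]
    constructor
    · rintro ⟨⟨hc, -⟩, h1⟩; exact ⟨hc, h1⟩
    · rintro ⟨hc, h1⟩
      refine ⟨⟨hc, ?_, ?_⟩, h1⟩
      · rintro rfl
        have : i+2 = i+1 := h1
        omega
      · rintro rfl
        have : i+3 = i+2 := h1
        omega
  have hC1card : countC1 (B1 A i) = u₁ + 1 := by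
    rw [countC1, hC1, Finset.card_insert_of_notMem, Finset.card_image_of_injOn,
      hfilter_eq]
    · rw [← countC1, hc1]
    · exact hinjOn.mono (by
        intro x hx
        exact Finset.mem_coe.2 (Finset.filter_subset _ _ (Finset.mem_coe.1 hx)))
    · intro h
      apply hnotmem
      obtain ⟨c₀, hc₀, heq⟩ := Finset.mem_image.1 h
      exact Finset.mem_image.2 ⟨c₀, Finset.filter_subset _ _ hc₀, heq⟩
  -- countC2
  have hexc : ∀ {q : (ℕ×ℕ)×(ℕ×ℕ)}, q ∈ markersC2 A → q ≠ ((i,i+2),(i+1,i+3)) →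
      q.1 ≠ (i,i+2) ∧ q.1 ≠ (i+1,i+3) ∧ q.2 ≠ (i,i+2) ∧ q.2 ≠ (i+1,i+3) :=
    fun hq hqne => marker_ne_parts hd hα hβ hq hqne
  have hC2 : markersC2 (B1 A i) =
      (markersC2 A \ {((i,i+2),(i+1,i+3))}).image (fun p => (am2 i p.1, am2 i p.2)) := by
    ext p
    constructor
    · intro hp
      obtain ⟨hp1, hp2, h2a, h2b, hlt, hcr⟩ := mem_markersC2.1 hp
      rcases mem_B1.1 hp1 with h | ⟨c₀, hc₀, h1, h2, hpe⟩
      · exfalso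
        have : i+1 = i+2 := by rw [h] at h2a; exact h2a
        omega
      rcases mem_B1.1 hp2 with h | ⟨c₁, hc₁, g1, g2, hpe'⟩
      · exfalso
        have : i+1 = i+2 := by rw [h] at h2b; exact h2b
        omega
      have hf := hfree hc₀ h1 h2
      have hg := hfree hc₁ g1 g2
      have hb := hd.1 c₀ hc₀
      have hb' := hd.1 c₁ hc₁
      have e2a : sh2 i c₀.2 = sh2 i c₀.1 + 2 := by rw [hpe] at h2a; exact h2a
      have d2a : c₀.2 = c₀.1 + 2 := by
        simp only [sh2] at e2a; split_ifs at e2a <;> omega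
      have e2b : sh2 i c₁.2 = sh2 i c₁.1 + 2 := by rw [hpe'] at h2b; exact h2b
      have d2b : c₁.2 = c₁.1 + 2 := by
        simp only [sh2] at e2b; split_ifs at e2b <;> omega
      have hlt' : sh2 i c₀.1 < sh2 i c₁.1 := by rw [hpe, hpe'] at hlt; exact hlt
      have dlt : c₀.1 < c₁.1 := sh2_reflect_lt hf.1 hg.1 hlt'
      have hcr' : Crosses (am2 i c₀) (am2 i c₁) := by rw [← hpe, ← hpe']; exact hcr
      have dcr : Crosses c₀ c₁ := by
        rcases hcr' with ⟨x1, x2, x3⟩ | ⟨x1, x2, x3⟩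
        · exact Or.inl ⟨sh2_reflect_lt hf.1 hg.1 x1, sh2_reflect_lt hg.1 hf.2 x2,
            sh2_reflect_lt hf.2 hg.2 x3⟩
        · exact Or.inr ⟨sh2_reflect_lt hg.1 hf.1 x1, sh2_reflect_lt hf.1 hg.2 x2,
            sh2_reflect_lt hg.2 hf.2 x3⟩
      refine Finset.mem_image.2 ⟨(c₀, c₁), Finset.mem_sdiff.2
        ⟨mem_markersC2.2 ⟨hc₀, hc₁, d2a, d2b, dlt, dcr⟩, ?_⟩, ?_⟩
      · rw [Finset.mem_singleton]
        intro h
        exact h1 (congrArg Prod.fst h)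
      · exact Prod.ext_iff.2 ⟨hpe.symm, hpe'.symm⟩
    · intro hp
      obtain ⟨q, hq, rfl⟩ := Finset.mem_image.1 hp
      obtain ⟨hqm, hqne⟩ := Finset.mem_sdiff.1 hq
      rw [Finset.mem_singleton] at hqne
      obtain ⟨q1, q2, q3, q4⟩ := hexc hqm hqne
      obtain ⟨hq1, hq2, q2a, q2b, qlt, qcr⟩ := mem_markersC2.1 hqm
      have hf := hfree hq1 q1 q2
      have hg := hfree hq2 q3 q4
      have hb := hd.1 _ hq1
      have hb' := hd.1 _ hq2
      have d2a : q.1.2 = q.1.1 + 2 := q2a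
      have d2b : q.2.2 = q.2.1 + 2 := q2b
      refine mem_markersC2.2 ⟨mem_B1.2 (Or.inr ⟨q.1, hq1, q1, q2, rfl⟩),
        mem_B1.2 (Or.inr ⟨q.2, hq2, q3, q4, rfl⟩), ?_, ?_, ?_, ?_⟩
      · show sh2 i q.1.2 = sh2 i q.1.1 + 2
        simp only [sh2]; split_ifs <;> omega
      · show sh2 i q.2.2 = sh2 i q.2.1 + 2
        simp only [sh2]; split_ifs <;> omega
      · show sh2 i q.1.1 < sh2 i q.2.1
        simp only [sh2]; split_ifs <;> omega
      · rcases qcr with ⟨x1, x2, x3⟩ | ⟨x1, x2, x3⟩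
        · refine Or.inl ⟨?_, ?_, ?_⟩ <;>
            (show sh2 i _ < sh2 i _; simp only [sh2]; split_ifs <;> omega)
        · refine Or.inr ⟨?_, ?_, ?_⟩ <;>
            (show sh2 i _ < sh2 i _; simp only [sh2]; split_ifs <;> omega)
  have hmarksub : ({((i,i+2),(i+1,i+3))} : Finset ((ℕ×ℕ)×(ℕ×ℕ))) ⊆ markersC2 A := by
    intro x hx
    rw [Finset.mem_singleton] at hx
    subst hx
    refine mem_markersC2.2 ⟨hα, hβ, rfl, rfl, show i < i+1 by omega,
      Or.inl ⟨show i < i+1 by omega, show i+1 < i+2 by omega, show i+2 < i+3 by omega⟩⟩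
  have hpinj : Set.InjOn (fun p : (ℕ×ℕ)×(ℕ×ℕ) => (am2 i p.1, am2 i p.2))
      ↑(markersC2 A \ {((i,i+2),(i+1,i+3))}) := by
    intro x hx y hy hxy
    rw [Finset.mem_coe, Finset.mem_sdiff, Finset.mem_singleton] at hx hy
    obtain ⟨x1, x2, x3, x4⟩ := hexc hx.1 hx.2
    obtain ⟨y1, y2, y3, y4⟩ := hexc hy.1 hy.2
    obtain ⟨ex1, ex2, hx1A, hx2A⟩ := marker_eq hx.1
    obtain ⟨ey1, ey2, hy1A, hy2A⟩ := marker_eq hy.1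
    have hfx := hfree (show x.1 ∈ A by rw [ex1]; exact hx1A) x1 x2
    have hfy := hfree (show y.1 ∈ A by rw [ey1]; exact hy1A) y1 y2
    have e1 : sh2 i x.1.1 = sh2 i y.1.1 := congrArg (Prod.fst ∘ Prod.fst) hxy
    have exy : x.1.1 = y.1.1 := by
      simp only [sh2] at e1; split_ifs at e1 <;> omega
    rw [Prod.ext_iff, ex1, ex2, ey1, ey2, exy]
    exact ⟨rfl, rfl⟩
  have hC2card : countC2 (B1 A i) = u₂ := by
    rw [← markersC2_card, hC2, Finset.card_image_of_injOn hpinj,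
      Finset.card_sdiff_of_subset hmarksub, Finset.card_singleton, markersC2_card, hc2]
    omega
  exact mem_ShapeF.2 ⟨⟨⟨hdiagB, hncB⟩, hmatB, hstkB⟩, hcardB, hC1card, hC2card⟩

lemma us2_reflect_lt {j u v : ℕ} (h : us2 j u < us2 j v) : u < v := by
  simp only [us2] at h; split_ifs at h <;> omega

lemma us2_mono_lt {j u v : ℕ} (h : u < v) : us2 j u < us2 j v := by
  simp only [us2]; split_ifs <;> omega

lemma exp1_mem {k s u₁ u₂ : ℕ} (hk : 2 < k) {B : Finset (ℕ×ℕ)} {j : ℕ}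
    (hB : B ∈ ShapeF k (s+1) (u₁+1) u₂) (h1arc : (j, j+1) ∈ B) :
    A1 B j ∈ ShapeF k (s+2) u₁ (u₂+1) ∧
      ((j,j+2),(j+1,j+3)) ∈ markersC2 (A1 B j) ∧ (j-1, j+4) ∉ A1 B j := by
  obtain ⟨⟨⟨hd, hnc⟩, hmat, hstk⟩, hcard, hc1, hc2⟩ := mem_ShapeF.1 hB
  have hfree : ∀ {c : ℕ×ℕ}, c ∈ B → c ≠ (j,j+1) →
      (c.1 < j ∨ j+1 < c.1) ∧ (c.2 < j ∨ j+1 < c.2) :=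
    fun hc h1 => free1' hd h1arc hc h1
  have hj1 : 1 ≤ j := (hd.1 _ h1arc).1
  have hj2 : j+1 ≤ 2*(s+1) := (hd.1 _ h1arc).2.2
  -- basic exclusions about endpoints of arcs of A1
  have hfst : ∀ c ∈ A1 B j, c.1 ≠ j+1 → c ≠ (j+1,j+3) := by
    intro c hc h h'
    exact h (congrArg Prod.fst h')
  have hsnd_ne : ∀ {c₀ : ℕ×ℕ}, c₀ ∈ B → c₀ ≠ (j,j+1) →
      (us2 j c₀.1 < j ∨ j+3 < us2 j c₀.1) ∧ (us2 j c₀.2 < j ∨ j+3 < us2 j c₀.2) := by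
    intro c₀ hc hne
    have hf := hfree hc hne
    constructor <;> (simp only [us2]; split_ifs <;> omega)
  -- diagram
  have hdiagA : IsDiagram (2*(s+2)) (A1 B j) := by
    constructor
    · intro a ha
      rcases mem_A1.1 ha with rfl | rfl | ⟨c₀, hc₀, h1, rfl⟩
      · exact ⟨hj1, by omega, by omega⟩
      · exact ⟨by omega, by omega, by omega⟩
      · have hb := hd.1 c₀ hc₀
        have hf := hfree hc₀ h1
        simp only [aum2, us2]
        split_ifs <;> omega
    · intro a ha b hb hab
      rcases mem_A1.1 ha with rfl | rfl | ⟨c₀, hc₀, h1, rfl⟩ <;>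
        rcases mem_A1.1 hb with rfl | rfl | ⟨c₁, hc₁, g1, rfl⟩
      · exact absurd rfl hab
      · exact ⟨by omega, by omega, by omega, by omega⟩
      · have hg := hfree hc₁ g1
        simp only [aum2, us2]
        split_ifs <;> refine ⟨by omega, by omega, by omega, by omega⟩
      · exact ⟨by omega, by omega, by omega, by omega⟩
      · exact absurd rfl hab
      · have hg := hfree hc₁ g1
        simp only [aum2, us2]
        split_ifs <;> refine ⟨by omega, by omega, by omega, by omega⟩
      · have hf := hfree hc₀ h1
        simp only [aum2, us2]
        split_ifs <;> refine ⟨by omega, by omega, by omega, by omega⟩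
      · have hf := hfree hc₀ h1
        simp only [aum2, us2]
        split_ifs <;> refine ⟨by omega, by omega, by omega, by omega⟩
      · have hne : c₀ ≠ c₁ := by rintro rfl; exact hab rfl
        obtain ⟨w1, w2, w3, w4⟩ := hd.2 c₀ hc₀ c₁ hc₁ hne
        simp only [aum2, us2]
        split_ifs <;> refine ⟨by omega, by omega, by omega, by omega⟩
  -- no k-crossing
  have hncA : ¬ HasKCrossing k (A1 B j) := by
    intro hA1
    apply hnc
    obtain ⟨f, hfA, hf1, hf2, hf3⟩ := hA1
    -- endpoint exclusions
    have hsnd1 : ∀ t, (f t).2 ≠ j+1 := by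
      intro t
      rcases mem_A1.1 (hfA t) with h | h | ⟨c₀, hc₀, h1, h⟩
      · rw [h]; show j+2 ≠ j+1; omega
      · rw [h]; show j+3 ≠ j+1; omega
      · rw [h]
        have hf := hfree hc₀ h1
        show us2 j c₀.2 ≠ j+1
        simp only [us2]; split_ifs <;> omega
    have hfst1 : ∀ t, (f t).1 = j+1 → f t = (j+1,j+3) := by
      intro t h
      rcases mem_A1.1 (hfA t) with h' | h' | ⟨c₀, hc₀, h1, h'⟩
      · exfalso; rw [h'] at h; exact absurd (h : j = j+1) (by omega)
      · exact h'
      · exfalso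
        rw [h'] at h
        have hf := hfree hc₀ h1
        have : us2 j c₀.1 = j+1 := h
        simp only [us2] at this; split_ifs at this <;> omega
    have hsnd2 : ∀ t, (f t).2 = j+2 → f t = (j,j+2) := by
      intro t h
      rcases mem_A1.1 (hfA t) with h' | h' | ⟨c₀, hc₀, h1, h'⟩
      · exact h'
      · exfalso; rw [h'] at h; exact absurd (h : j+3 = j+2) (by omega)
      · exfalso
        rw [h'] at h
        have hf := hfree hc₀ h1
        have : us2 j c₀.2 = j+2 := h
        simp only [us2] at this; split_ifs at this <;> omega
    have hfst2 : ∀ t, (f t).1 ≠ j+2 := by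
      intro t
      rcases mem_A1.1 (hfA t) with h | h | ⟨c₀, hc₀, h1, h⟩
      · rw [h]; show j ≠ j+2; omega
      · rw [h]; show j+1 ≠ j+2; omega
      · rw [h]
        have hf := hfree hc₀ h1
        show us2 j c₀.1 ≠ j+2
        simp only [us2]; split_ifs <;> omega
    have hnoα : ∀ t, f t ≠ (j,j+2) := by
      intro t ht
      obtain ⟨t₁, t₂, hne₁, hne₂, hlt12⟩ := fin_two_other hk t
      have hnolt : ∀ t', t' < t → False := by
        intro t' hlt
        have b1 := hf2 t' t hlt
        have b2 := hf3 t t'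
        rw [ht] at b1 b2
        have b1' : (f t').2 < j+2 := b1
        have b2' : j < (f t').2 := b2
        exact hsnd1 t' (by omega)
      have hgt : ∀ t', t < t' → f t' = (j+1,j+3) := by
        intro t' hlt
        have b1 := hf1 t t' hlt
        have b2 := hf3 t' t
        rw [ht] at b1 b2
        have b1' : j < (f t').1 := b1
        have b2' : (f t').1 < j+2 := b2
        exact hfst1 t' (by omega)
      have ht₁ : t < t₁ := by
        rcases lt_or_gt_of_ne hne₁ with h | h
        · exact absurd h (fun hh => hnolt t₁ hh)
        · exact h
      have ht₂ : t < t₂ := by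
        rcases lt_or_gt_of_ne hne₂ with h | h
        · exact absurd h (fun hh => hnolt t₂ hh)
        · exact h
      have e1 := hgt t₁ ht₁
      have e2 := hgt t₂ ht₂
      have := hf1 t₁ t₂ hlt12
      rw [e1, e2] at this
      exact absurd (this : j+1 < j+1) (by omega)
    have hnoβ : ∀ t, f t ≠ (j+1,j+3) := by
      intro t ht
      obtain ⟨t₁, t₂, hne₁, hne₂, hlt12⟩ := fin_two_other hk t
      have hnogt : ∀ t', t < t' → False := by
        intro t' hlt
        have b1 := hf1 t t' hlt
        have b2 := hf3 t' t
        rw [ht] at b1 b2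
        have b1' : j+1 < (f t').1 := b1
        have b2' : (f t').1 < j+3 := b2
        exact hfst2 t' (by omega)
      have hltc : ∀ t', t' < t → f t' = (j,j+2) := by
        intro t' hlt
        have b1 := hf2 t' t hlt
        have b2 := hf3 t t'
        rw [ht] at b1 b2
        have b1' : (f t').2 < j+3 := b1
        have b2' : j+1 < (f t').2 := b2
        exact hsnd2 t' (by omega)
      have ht₁ : t₁ < t := by
        rcases lt_or_gt_of_ne hne₁ with h | h
        · exact h
        · exact absurd h (fun hh => hnogt t₁ hh)
      have ht₂ : t₂ < t := by
        rcases lt_or_gt_of_ne hne₂ with h | h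
        · exact h
        · exact absurd h (fun hh => hnogt t₂ hh)
      have e1 := hltc t₁ ht₁
      have e2 := hltc t₂ ht₂
      have := hf1 t₁ t₂ hlt12
      rw [e1, e2] at this
      exact absurd (this : j < j) (by omega)
    have hold : ∀ t, ∃ c₀, c₀ ∈ B ∧ c₀ ≠ (j,j+1) ∧ f t = aum2 j c₀ := by
      intro t
      rcases mem_A1.1 (hfA t) with h | h | h
      · exact absurd h (hnoα t)
      · exact absurd h (hnoβ t)
      · exact h
    choose g hg1 hg2 hg3 using hold
    refine ⟨g, hg1, ?_, ?_, ?_⟩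
    · intro a b hab
      have h := hf1 a b hab
      rw [hg3 a, hg3 b] at h
      exact us2_reflect_lt h
    · intro a b hab
      have h := hf2 a b hab
      rw [hg3 a, hg3 b] at h
      exact us2_reflect_lt h
    · intro a b
      have h := hf3 a b
      rw [hg3 a, hg3 b] at h
      exact us2_reflect_lt h
  -- matching
  have hmatA : IsMatchingOn (2*(s+2)) (A1 B j) := by
    intro v hv1 hv2
    rcases Nat.lt_or_ge v j with hv | hv
    · obtain ⟨a, haB, hva⟩ := hmat v hv1 (by omega)
      have hne : a ≠ (j,j+1) := by
        rintro rfl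
        have : v = j ∨ v = j+1 := hva
        omega
      refine ⟨aum2 j a, mem_A1.2 (Or.inr (Or.inr ⟨a, haB, hne, rfl⟩)), ?_⟩
      have hf := hfree haB hne
      have hva' : v = a.1 ∨ v = a.2 := hva
      show v = us2 j a.1 ∨ v = us2 j a.2
      simp only [us2]; split_ifs <;> omega
    · rcases Nat.lt_or_ge (j+3) v with hv' | hv'
      · obtain ⟨a, haB, hva⟩ := hmat (v-2) (by omega) (by omega)
        have hne : a ≠ (j,j+1) := by
          rintro rfl
          have : v-2 = j ∨ v-2 = j+1 := hva
          omega
        refine ⟨aum2 j a, mem_A1.2 (Or.inr (Or.inr ⟨a, haB, hne, rfl⟩)), ?_⟩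
        have hf := hfree haB hne
        have hva' : v-2 = a.1 ∨ v-2 = a.2 := hva
        show v = us2 j a.1 ∨ v = us2 j a.2
        simp only [us2]; split_ifs <;> omega
      · by_cases hvv : v = j ∨ v = j+2
        · exact ⟨(j,j+2), mem_A1.2 (Or.inl rfl), hvv⟩
        · exact ⟨(j+1,j+3), mem_A1.2 (Or.inr (Or.inl rfl)),
            show v = j+1 ∨ v = j+3 by omega⟩
  -- stack-free
  have hstkA : ∀ a ∈ A1 B j, (a.1+1, a.2-1) ∉ A1 B j := by
    intro a ha hcon
    rcases mem_A1.1 ha with rfl | rfl | ⟨c₀, hc₀, h1, rfl⟩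
    · -- a = (j, j+2), inner = (j+1, j+1)
      rcases mem_A1.1 hcon with h | h | ⟨c₁, hc₁, g1, h⟩
      · exact absurd (congrArg Prod.snd h : j+2-1 = j+2) (by omega)
      · exact absurd (congrArg Prod.fst h : j+1 = j+1) (fun _ => by
          exact absurd (congrArg Prod.snd h : j+2-1 = j+3) (by omega))
      · have hg := hfree hc₁ g1
        have e1 : j+1 = us2 j c₁.1 := congrArg Prod.fst h
        simp only [us2] at e1; split_ifs at e1 <;> omega
    · -- a = (j+1, j+3), inner = (j+2, j+2)
      rcases mem_A1.1 hcon with h | h | ⟨c₁, hc₁, g1, h⟩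
      · exact absurd (congrArg Prod.fst h : j+1+1 = j) (by omega)
      · exact absurd (congrArg Prod.fst h : j+1+1 = j+1) (by omega)
      · have hg := hfree hc₁ g1
        have e1 : j+1+1 = us2 j c₁.1 := congrArg Prod.fst h
        simp only [us2] at e1; split_ifs at e1 <;> omega
    · -- a old
      have hf := hfree hc₀ h1
      have hb := hd.1 c₀ hc₀
      rcases mem_A1.1 hcon with h | h | ⟨c₁, hc₁, g1, h⟩
      · -- inner = (j, j+2): impossible since us2 c₀.2 = j+3 needs c₀.2 = j+1
        have e2 : us2 j c₀.2 - 1 = j+2 := congrArg Prod.snd h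
        simp only [us2] at e2; split_ifs at e2 <;> omega
      · -- inner = (j+1, j+3): us2 c₀.1 = j: impossible
        have e1 : us2 j c₀.1 + 1 = j+1 := congrArg Prod.fst h
        simp only [us2] at e1; split_ifs at e1 <;> omega
      · have hg := hfree hc₁ g1
        have hb' := hd.1 c₁ hc₁
        have e1 : us2 j c₀.1 + 1 = us2 j c₁.1 := congrArg Prod.fst h
        have e2 : us2 j c₀.2 - 1 = us2 j c₁.2 := congrArg Prod.snd h
        have k1 : c₁.1 = c₀.1 + 1 := by
          simp only [us2] at e1; split_ifs at e1 <;> omega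
        have k2 : c₁.2 = c₀.2 - 1 := by
          simp only [us2] at e2; split_ifs at e2 <;> omega
        exact hstk c₀ hc₀ (show (c₀.1+1, c₀.2-1) ∈ B from
          (Prod.ext_iff.2 ⟨k1.symm, k2.symm⟩ : (c₀.1+1, c₀.2-1) = c₁) ▸ hc₁)
  -- cardinality
  have haim : ∀ c₀ ∈ B \ {(j,j+1)}, (aum2 j c₀).1 ≠ j ∧ (aum2 j c₀).1 ≠ j+1 := by
    intro c₀ hc₀
    rw [Finset.mem_sdiff, Finset.mem_singleton] at hc₀
    have hf := hfree hc₀.1 hc₀.2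
    constructor <;> (show us2 j _ ≠ _; simp only [us2]; split_ifs <;> omega)
  have hanotmem : (j,j+2) ∉ (B \ {(j,j+1)}).image (aum2 j) := by
    rw [Finset.mem_image]; rintro ⟨c₀, hc₀, heq⟩
    exact absurd (congrArg Prod.fst heq : (aum2 j c₀).1 = j) (haim c₀ hc₀).1
  have hbnotmem : (j+1,j+3) ∉ (B \ {(j,j+1)}).image (aum2 j) := by
    rw [Finset.mem_image]; rintro ⟨c₀, hc₀, heq⟩
    exact absurd (congrArg Prod.fst heq : (aum2 j c₀).1 = j+1) (haim c₀ hc₀).2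
  have haum2inj : Set.InjOn (aum2 j) ↑(B \ {(j,j+1)}) := by
    intro x _ y _ hxy
    have e1 : us2 j x.1 = us2 j y.1 := congrArg Prod.fst hxy
    have e2 : us2 j x.2 = us2 j y.2 := congrArg Prod.snd hxy
    refine Prod.ext_iff.2 ⟨?_, ?_⟩
    · simp only [us2] at e1; split_ifs at e1 <;> omega
    · simp only [us2] at e2; split_ifs at e2 <;> omega
  have h1sub : ({(j,j+1)} : Finset (ℕ×ℕ)) ⊆ B := by
    intro x hx; rw [Finset.mem_singleton] at hx; rw [hx]; exact h1arc
  have hab_notmem : (j,j+2) ∉ insert (j+1,j+3) ((B \ {(j,j+1)}).image (aum2 j)) := by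
    rw [Finset.mem_insert]
    rintro (h | h)
    · exact absurd (congrArg Prod.fst h : j = j+1) (by omega)
    · exact hanotmem h
  have hcardA : (A1 B j).card = s+2 := by
    rw [A1, Finset.card_insert_of_notMem hab_notmem,
      Finset.card_insert_of_notMem hbnotmem,
      Finset.card_image_of_injOn haum2inj, Finset.card_sdiff_of_subset h1sub,
      Finset.card_singleton, hcard]
    omega
  -- countC1
  have hC1A : (A1 B j).filter Is1Arc =
      ((B.filter Is1Arc) \ {(j,j+1)}).image (aum2 j) := by
    ext c
    simp only [Finset.mem_filter, Finset.mem_image, Finset.mem_sdiff,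
      Finset.mem_singleton]
    constructor
    · rintro ⟨hc, h1a⟩
      rcases mem_A1.1 hc with rfl | rfl | ⟨c₀, hc₀, h1, rfl⟩
      · exfalso; have h' : j+2 = j+1 := h1a; omega
      · exfalso; have h' : j+3 = j+1+1 := h1a; omega
      · have hf := hfree hc₀ h1
        have h1a' : us2 j c₀.2 = us2 j c₀.1 + 1 := h1a
        have hone : c₀.2 = c₀.1 + 1 := by
          simp only [us2] at h1a'; split_ifs at h1a' <;> omega
        exact ⟨c₀, ⟨⟨hc₀, hone⟩, h1⟩, rfl⟩
    · rintro ⟨c₀, ⟨⟨hc₀, hone⟩, h1⟩, rfl⟩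
      have hf := hfree hc₀ h1
      have hone' : c₀.2 = c₀.1 + 1 := hone
      refine ⟨mem_A1.2 (Or.inr (Or.inr ⟨c₀, hc₀, h1, rfl⟩)), ?_⟩
      show us2 j c₀.2 = us2 j c₀.1 + 1
      simp only [us2]; split_ifs <;> omega
  have hC1cardA : countC1 (A1 B j) = u₁ := by
    rw [countC1, hC1A, Finset.card_image_of_injOn, Finset.card_sdiff_of_subset, 
      Finset.card_singleton, ← countC1, hc1]
    · omega
    · intro x hx; rw [Finset.mem_singleton] at hx; rw [hx]
      exact Finset.mem_filter.2 ⟨h1arc, rfl⟩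
    · exact haum2inj.mono (by
        intro x hx
        rw [Finset.mem_coe, Finset.mem_sdiff, Finset.mem_singleton] at hx ⊢
        exact ⟨Finset.mem_filter.1 hx.1 |>.1, hx.2⟩)
  -- countC2
  have hC2A : markersC2 (A1 B j) = insert ((j,j+2),(j+1,j+3))
      ((markersC2 B).image (fun p => (aum2 j p.1, aum2 j p.2))) := by
    ext p
    simp only [Finset.mem_insert, Finset.mem_image]
    constructor
    · intro hp
      obtain ⟨hp1, hp2, h2a, h2b, hlt, hcr⟩ := mem_markersC2.1 hp
      have hcr1 : p.1.1 < p.2.1 ∧ p.2.1 < p.1.2 ∧ p.1.2 < p.2.2 := by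
        rcases hcr with h | h
        · exact h
        · exact absurd hlt (by omega)
      rcases mem_A1.1 hp1 with e1 | e1 | ⟨c₀, hc₀, h1, e1⟩
      · -- p.1 = α: p.2 must be β
        have h2a1 : p.2.1 = j+1 := by
          have u1 : p.1.1 = j := congrArg Prod.fst e1
          have u2 : p.1.2 = j+2 := congrArg Prod.snd e1
          omega
        rcases mem_A1.1 hp2 with e2 | e2 | ⟨c₁, hc₁, g1, e2⟩
        · exact absurd (h2a1 ▸ congrArg Prod.fst e2 : p.2.1 = j) (by omega)
        · exact Or.inl (Prod.ext_iff.2 ⟨e1, e2⟩)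
        · exfalso
          have hg := hfree hc₁ g1
          have h5 : p.2.1 = us2 j c₁.1 := congrArg Prod.fst e2
          have : us2 j c₁.1 = j+1 := by omega
          simp only [us2] at this; split_ifs at this <;> omega
      · -- p.1 = β: impossible: p.2.1 = j+2
        exfalso
        have u1 : p.1.1 = j+1 := congrArg Prod.fst e1
        have u2 : p.1.2 = j+3 := congrArg Prod.snd e1
        have h2a1 : p.2.1 = j+2 := by omega
        rcases mem_A1.1 hp2 with e2 | e2 | ⟨c₁, hc₁, g1, e2⟩
        · have u3 : p.2.1 = j := congrArg Prod.fst e2; omega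
        · have u3 : p.2.1 = j+1 := congrArg Prod.fst e2; omega
        · have hg := hfree hc₁ g1
          have h5 : p.2.1 = us2 j c₁.1 := congrArg Prod.fst e2
          have : us2 j c₁.1 = j+2 := by omega
          simp only [us2] at this; split_ifs at this <;> omega
      · -- p.1 old
        have hf := hfree hc₀ h1
        rcases mem_A1.1 hp2 with e2 | e2 | ⟨c₁, hc₁, g1, e2⟩
        · -- p.2 = α: p.1.2 = j+1: impossible
          exfalso
          have u1 : p.2.1 = j := congrArg Prod.fst e2
          have u2 : p.2.2 = j+2 := congrArg Prod.snd e2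
          have h5 : p.1.2 = us2 j c₀.2 := congrArg Prod.snd e1
          have : us2 j c₀.2 = j+1 := by omega
          simp only [us2] at this; split_ifs at this <;> omega
        · -- p.2 = β: p.1.2 = j+2: impossible for old
          exfalso
          have u1 : p.2.1 = j+1 := congrArg Prod.fst e2
          have u2 : p.2.2 = j+3 := congrArg Prod.snd e2
          have h5 : p.1.2 = us2 j c₀.2 := congrArg Prod.snd e1
          have : us2 j c₀.2 = j+2 := by omega
          simp only [us2] at this; split_ifs at this <;> omega
        · -- both old
          right
          have hg := hfree hc₁ g1
          have u11 : p.1.1 = us2 j c₀.1 := congrArg Prod.fst e1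
          have u12 : p.1.2 = us2 j c₀.2 := congrArg Prod.snd e1
          have u21 : p.2.1 = us2 j c₁.1 := congrArg Prod.fst e2
          have u22 : p.2.2 = us2 j c₁.2 := congrArg Prod.snd e2
          have d2a : c₀.2 = c₀.1 + 2 := by
            have : p.1.2 = p.1.1 + 2 := h2a
            rw [u11, u12] at this
            simp only [us2] at this; split_ifs at this <;> omega
          have d2b : c₁.2 = c₁.1 + 2 := by
            have : p.2.2 = p.2.1 + 2 := h2b
            rw [u21, u22] at this
            simp only [us2] at this; split_ifs at this <;> omega
          refine ⟨(c₀, c₁), mem_markersC2.2 ⟨hc₀, hc₁, d2a, d2b, ?_, Or.inl ⟨?_, ?_, ?_⟩⟩, ?_⟩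
          · exact us2_reflect_lt (by rw [← u11, ← u21]; exact hlt)
          · exact us2_reflect_lt (by rw [← u11, ← u21]; exact hcr1.1)
          · exact us2_reflect_lt (by rw [← u21, ← u12]; exact hcr1.2.1)
          · exact us2_reflect_lt (by rw [← u12, ← u22]; exact hcr1.2.2)
          · exact (Prod.ext_iff.2 ⟨e1.symm, e2.symm⟩ :
              ((aum2 j c₀, aum2 j c₁) : (ℕ×ℕ)×(ℕ×ℕ)) = p)
    · rintro (rfl | ⟨q, hq, rfl⟩)
      · refine mem_markersC2.2 ⟨mem_A1.2 (Or.inl rfl), mem_A1.2 (Or.inr (Or.inl rfl)),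
          rfl, rfl, show j < j+1 by omega,
          Or.inl ⟨show j < j+1 by omega, show j+1 < j+2 by omega,
            show j+2 < j+3 by omega⟩⟩
      · obtain ⟨hq1, hq2, q2a, q2b, qlt, qcr⟩ := mem_markersC2.1 hq
        have hne1 : q.1 ≠ (j,j+1) := by
          intro h
          have : q.1.2 = q.1.1 + 1 := by
            rw [h]
          have h2 : q.1.2 = q.1.1 + 2 := q2a
          omega
        have hne2 : q.2 ≠ (j,j+1) := by
          intro h
          have : q.2.2 = q.2.1 + 1 := by
            rw [h]
          have h2 : q.2.2 = q.2.1 + 2 := q2b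
          omega
        have hf := hfree hq1 hne1
        have hg := hfree hq2 hne2
        have d2a : q.1.2 = q.1.1 + 2 := q2a
        have d2b : q.2.2 = q.2.1 + 2 := q2b
        refine mem_markersC2.2 ⟨mem_A1.2 (Or.inr (Or.inr ⟨q.1, hq1, hne1, rfl⟩)),
          mem_A1.2 (Or.inr (Or.inr ⟨q.2, hq2, hne2, rfl⟩)), ?_, ?_, ?_, ?_⟩
        · show us2 j q.1.2 = us2 j q.1.1 + 2
          simp only [us2]; split_ifs <;> omega
        · show us2 j q.2.2 = us2 j q.2.1 + 2
          simp only [us2]; split_ifs <;> omega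
        · exact us2_mono_lt qlt
        · rcases qcr with ⟨x1, x2, x3⟩ | ⟨x1, x2, x3⟩
          · exact Or.inl ⟨us2_mono_lt x1, us2_mono_lt x2, us2_mono_lt x3⟩
          · exact Or.inr ⟨us2_mono_lt x1, us2_mono_lt x2, us2_mono_lt x3⟩
  have hC2cardA : countC2 (A1 B j) = u₂ + 1 := by
    rw [← markersC2_card, hC2A, Finset.card_insert_of_notMem,
      Finset.card_image_of_injOn, markersC2_card, hc2]
    · intro x hx y hy hxy
      have e1 : aum2 j x.1 = aum2 j y.1 := congrArg Prod.fst hxy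
      have e2 : aum2 j x.2 = aum2 j y.2 := congrArg Prod.snd hxy
      have f1 : us2 j x.1.1 = us2 j y.1.1 := congrArg Prod.fst e1
      have f2 : us2 j x.1.2 = us2 j y.1.2 := congrArg Prod.snd e1
      have f3 : us2 j x.2.1 = us2 j y.2.1 := congrArg Prod.fst e2
      have f4 : us2 j x.2.2 = us2 j y.2.2 := congrArg Prod.snd e2
      refine Prod.ext_iff.2 ⟨Prod.ext_iff.2 ⟨?_, ?_⟩, Prod.ext_iff.2 ⟨?_, ?_⟩⟩ <;>
        (first
          | (simp only [us2] at f1; split_ifs at f1 <;> omega)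
          | (simp only [us2] at f2; split_ifs at f2 <;> omega)
          | (simp only [us2] at f3; split_ifs at f3 <;> omega)
          | (simp only [us2] at f4; split_ifs at f4 <;> omega))
    · rw [Finset.mem_image]
      rintro ⟨q, hq, heq⟩
      obtain ⟨hq1, -, q2a, -, -, -⟩ := mem_markersC2.1 hq
      have hne1 : q.1 ≠ (j,j+1) := by
        intro h
        have : q.1.2 = q.1.1 + 1 := by rw [h]
        have h2 : q.1.2 = q.1.1 + 2 := q2a
        omega
      have hf := hfree hq1 hne1
      have : us2 j q.1.1 = j := congrArg (Prod.fst ∘ Prod.fst) heq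
      simp only [us2] at this; split_ifs at this <;> omega
  -- no spanning arc for case 1
  have hnospan : (j-1, j+4) ∉ A1 B j := by
    intro h
    rcases mem_A1.1 h with e | e | ⟨c₀, hc₀, h1, e⟩
    · exact absurd (congrArg Prod.snd e : (j:ℕ)+4 = j+2) (by omega)
    · exact absurd (congrArg Prod.fst e : (j:ℕ)-1 = j+1) (by omega)
    · have hf := hfree hc₀ h1
      have hb := hd.1 c₀ hc₀
      have e1 : (j:ℕ)-1 = us2 j c₀.1 := congrArg Prod.fst e
      have e2 : (j:ℕ)+4 = us2 j c₀.2 := congrArg Prod.snd e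
      have k1 : c₀.1 = j-1 := by
        simp only [us2] at e1; split_ifs at e1 <;> omega
      have k2 : c₀.2 = j+2 := by
        simp only [us2] at e2; split_ifs at e2 <;> omega
      apply hstk c₀ hc₀
      have : (c₀.1+1, c₀.2-1) = (j, j+1) := Prod.ext_iff.2 ⟨by omega, by omega⟩
      rw [this]; exact h1arc
  refine ⟨mem_ShapeF.2 ⟨⟨⟨hdiagA, hncA⟩, hmatA, hstkA⟩, hcardA, hC1cardA, hC2cardA⟩,
    ?_, hnospan⟩
  rw [hC2A]
  exact Finset.mem_insert_self _ _

lemma A1_B1 {n : ℕ} {A : Finset (ℕ×ℕ)} {i : ℕ} (hd : IsDiagram n A)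
    (hα : (i,i+2) ∈ A) (hβ : (i+1,i+3) ∈ A) : A1 (B1 A i) i = A := by
  ext c
  rw [mem_A1]
  constructor
  · rintro (rfl | rfl | ⟨c₀, hc₀, hne, rfl⟩)
    · exact hα
    · exact hβ
    · rcases mem_B1.1 hc₀ with rfl | ⟨c₁, hc₁, h1, h2, rfl⟩
      · exact absurd rfl hne
      · have hf := free1 hd hα hβ hc₁ h1 h2
        have heq : aum2 i (am2 i c₁) = c₁ := by
          refine Prod.ext_iff.2 ⟨?_, ?_⟩ <;>
            (show us2 i (sh2 i _) = _; simp only [us2, sh2]; split_ifs <;> omega)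
        rw [heq]; exact hc₁
  · intro hc
    by_cases h1 : c = (i,i+2)
    · exact Or.inl h1
    by_cases h2 : c = (i+1,i+3)
    · exact Or.inr (Or.inl h2)
    have hf := free1 hd hα hβ hc h1 h2
    refine Or.inr (Or.inr ⟨am2 i c, mem_B1.2 (Or.inr ⟨c, hc, h1, h2, rfl⟩), ?_, ?_⟩)
    · intro h
      have : sh2 i c.1 = i := congrArg Prod.fst h
      simp only [sh2] at this; split_ifs at this <;> omega
    · have heq : aum2 i (am2 i c) = c := by
        refine Prod.ext_iff.2 ⟨?_, ?_⟩ <;>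
          (show us2 i (sh2 i _) = _; simp only [us2, sh2]; split_ifs <;> omega)
      exact heq.symm

lemma B1_A1 {n : ℕ} {B : Finset (ℕ×ℕ)} {j : ℕ} (hd : IsDiagram n B)
    (h1arc : (j,j+1) ∈ B) : B1 (A1 B j) j = B := by
  have hid : ∀ c : ℕ×ℕ, am2 j (aum2 j c) = c := by
    intro c
    refine Prod.ext_iff.2 ⟨?_, ?_⟩ <;>
      (show sh2 j (us2 j _) = _; simp only [us2, sh2]; split_ifs <;> omega)
  ext c
  rw [mem_B1]
  constructor
  · rintro (rfl | ⟨c₀, hc₀, h1, h2, rfl⟩)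
    · exact h1arc
    · rcases mem_A1.1 hc₀ with rfl | rfl | ⟨c₁, hc₁, hne, rfl⟩
      · exact absurd rfl h1
      · exact absurd rfl h2
      · rw [hid c₁]; exact hc₁
  · intro hc
    by_cases h0 : c = (j,j+1)
    · exact Or.inl h0
    refine Or.inr ⟨aum2 j c, mem_A1.2 (Or.inr (Or.inr ⟨c, hc, h0, rfl⟩)), ?_, ?_, ?_⟩
    · intro h
      have : us2 j c.2 = j+2 := congrArg Prod.snd h
      simp only [us2] at this; split_ifs at this <;> omega
    · intro h
      have : us2 j c.2 = j+3 := congrArg Prod.snd h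
      simp only [us2] at this; split_ifs at this <;> omega
    · exact (hid c).symm

lemma sh4_reflect_lt {i u v : ℕ} (hu : u < i-1 ∨ i+4 < u) (hv : v < i-1 ∨ i+4 < v)
    (h : sh4 i u < sh4 i v) : u < v := by
  simp only [sh4] at h; split_ifs at h <;> omega

lemma col2_mem {k s u₁ u₂ : ℕ} (hk : 2 < k) {A : Finset (ℕ×ℕ)} {i : ℕ}
    (hA : A ∈ ShapeF k (s+2) u₁ (u₂+1))
    (hα : (i, i+2) ∈ A) (hβ : (i+1, i+3) ∈ A) (hγ : (i-1, i+4) ∈ A) :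
    B2 A i ∈ ShapeF k s (u₁+1) u₂ := by
  obtain ⟨⟨⟨hd, hnc⟩, hmat, hstk⟩, hcard, hc1, hc2⟩ := mem_ShapeF.1 hA
  have hfree : ∀ {c : ℕ×ℕ}, c ∈ A → c ≠ (i,i+2) → c ≠ (i+1,i+3) → c ≠ (i-1,i+4) →
      (c.1 < i-1 ∨ i+4 < c.1) ∧ (c.2 < i-1 ∨ i+4 < c.2) :=
    fun hc h1 h2 h3 => free2 hd hα hβ hγ hc h1 h2 h3
  have hi1 : 1 ≤ i-1 := (hd.1 _ hγ).1
  have hi4 : i+4 ≤ 2*(s+2) := (hd.1 _ hγ).2.2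
  -- the diagram property
  have hdiagB : IsDiagram (2*s) (B2 A i) := by
    constructor
    · intro a ha
      rcases mem_B2.1 ha with rfl | ⟨c₀, hc₀, h1, h2, h3, rfl⟩
      · refine ⟨hi1, by omega, by omega⟩
      · have hb := hd.1 c₀ hc₀
        have hf := hfree hc₀ h1 h2 h3
        simp only [am4, sh4]
        split_ifs <;> omega
    · intro a ha b hb hab
      rcases mem_B2.1 ha with rfl | ⟨c₀, hc₀, h1, h2, h3, rfl⟩ <;>
        rcases mem_B2.1 hb with rfl | ⟨c₁, hc₁, g1, g2, g3, rfl⟩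
      · exact absurd rfl hab
      · have hf := hfree hc₁ g1 g2 g3
        simp only [am4, sh4]
        split_ifs <;> refine ⟨by omega, by omega, by omega, by omega⟩
      · have hf := hfree hc₀ h1 h2 h3
        simp only [am4, sh4]
        split_ifs <;> refine ⟨by omega, by omega, by omega, by omega⟩
      · have hf := hfree hc₀ h1 h2 h3
        have hg := hfree hc₁ g1 g2 g3
        have hne : c₀ ≠ c₁ := by rintro rfl; exact hab rfl
        obtain ⟨w1, w2, w3, w4⟩ := hd.2 c₀ hc₀ c₁ hc₁ hne
        simp only [am4, sh4]
        split_ifs <;> refine ⟨by omega, by omega, by omega, by omega⟩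
  -- noncrossing
  have hncB : ¬ HasKCrossing k (B2 A i) := by
    intro hB
    apply hnc
    obtain ⟨f, hfA, hf1, hf2, hf3⟩ := hB
    have hne1arc : ∀ t, f t ≠ (i-1, i) := by
      intro t ht
      obtain ⟨t₁, t₂, hne₁, hne₂, hlt⟩ := fin_two_other hk t
      rcases lt_or_gt_of_ne hne₁ with h | h
      · have a1 := hf2 t₁ t h
        have a3 := hf3 t t₁
        rw [ht] at a1 a3
        have a1' : (f t₁).2 < i := a1
        have a3' : i-1 < (f t₁).2 := a3
        omega
      · have a1 := hf1 t t₁ h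
        have a3 := hf3 t₁ t
        rw [ht] at a1 a3
        have a1' : i-1 < (f t₁).1 := a1
        have a3' : (f t₁).1 < i := a3
        omega
    have hold : ∀ t, ∃ c₀, c₀ ∈ A ∧ c₀ ≠ (i,i+2) ∧ c₀ ≠ (i+1,i+3) ∧
        c₀ ≠ (i-1,i+4) ∧ f t = am4 i c₀ := by
      intro t
      rcases mem_B2.1 (hfA t) with h | h
      · exact absurd h (hne1arc t)
      · exact h
    choose g hg1 hg2 hg3 hg4 hg5 using hold
    refine ⟨g, hg1, ?_, ?_, ?_⟩
    · intro a b hab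
      have h := hf1 a b hab
      rw [hg5 a, hg5 b] at h
      exact sh4_reflect_lt (hfree (hg1 a) (hg2 a) (hg3 a) (hg4 a)).1
        (hfree (hg1 b) (hg2 b) (hg3 b) (hg4 b)).1 h
    · intro a b hab
      have h := hf2 a b hab
      rw [hg5 a, hg5 b] at h
      exact sh4_reflect_lt (hfree (hg1 a) (hg2 a) (hg3 a) (hg4 a)).2
        (hfree (hg1 b) (hg2 b) (hg3 b) (hg4 b)).2 h
    · intro a b
      have h := hf3 a b
      rw [hg5 a, hg5 b] at h
      exact sh4_reflect_lt (hfree (hg1 a) (hg2 a) (hg3 a) (hg4 a)).1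
        (hfree (hg1 b) (hg2 b) (hg3 b) (hg4 b)).2 h
  -- matching
  have hmatB : IsMatchingOn (2*s) (B2 A i) := by
    intro v hv1 hv2
    rcases Nat.lt_or_ge v (i-1) with hv | hv
    · obtain ⟨a, haA, hva⟩ := hmat v hv1 (by omega)
      have hne1 : a ≠ (i,i+2) := by
        rintro rfl
        have : v = i ∨ v = i+2 := hva
        omega
      have hne2 : a ≠ (i+1,i+3) := by
        rintro rfl
        have : v = i+1 ∨ v = i+3 := hva
        omega
      have hne3 : a ≠ (i-1,i+4) := by
        rintro rfl
        have : v = i-1 ∨ v = i+4 := hva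
        omega
      refine ⟨am4 i a, mem_B2.2 (Or.inr ⟨a, haA, hne1, hne2, hne3, rfl⟩), ?_⟩
      have hf := hfree haA hne1 hne2 hne3
      have hva' : v = a.1 ∨ v = a.2 := hva
      show v = sh4 i a.1 ∨ v = sh4 i a.2
      simp only [sh4]; split_ifs <;> omega
    · rcases Nat.lt_or_ge i v with hv' | hv'
      · obtain ⟨a, haA, hva⟩ := hmat (v+4) (by omega) (by omega)
        have hva' : v+4 = a.1 ∨ v+4 = a.2 := hva
        have hne1 : a ≠ (i,i+2) := by
          rintro rfl
          have : v+4 = i ∨ v+4 = i+2 := hva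
          omega
        have hne2 : a ≠ (i+1,i+3) := by
          rintro rfl
          have : v+4 = i+1 ∨ v+4 = i+3 := hva
          omega
        have hne3 : a ≠ (i-1,i+4) := by
          rintro rfl
          have : v+4 = i-1 ∨ v+4 = i+4 := hva
          omega
        refine ⟨am4 i a, mem_B2.2 (Or.inr ⟨a, haA, hne1, hne2, hne3, rfl⟩), ?_⟩
        have hf := hfree haA hne1 hne2 hne3
        show v = sh4 i a.1 ∨ v = sh4 i a.2
        simp only [sh4]; split_ifs <;> omega
      · exact ⟨(i-1,i), mem_B2.2 (Or.inl rfl), show v = i-1 ∨ v = i by omega⟩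
  -- stack-free
  have hstkB : ∀ a ∈ B2 A i, (a.1+1, a.2-1) ∉ B2 A i := by
    intro a ha hcon
    rcases mem_B2.1 ha with rfl | ⟨c₀, hc₀, h1, h2, h3, rfl⟩
    · rcases mem_B2.1 hcon with hii | ⟨c₁, hc₁, g1, g2, g3, heq⟩
      · have : i-1+1 = i-1 := congrArg Prod.fst hii
        omega
      · have hf := hfree hc₁ g1 g2 g3
        have e1 : i-1+1 = sh4 i c₁.1 := congrArg Prod.fst heq
        simp only [sh4] at e1; split_ifs at e1 <;> omega
    · rcases mem_B2.1 hcon with heq | ⟨c₁, hc₁, g1, g2, g3, heq⟩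
      · have hf := hfree hc₀ h1 h2 h3
        have hb := hd.1 c₀ hc₀
        have e1 : sh4 i c₀.1 + 1 = i-1 := congrArg Prod.fst heq
        have e2 : sh4 i c₀.2 - 1 = i := congrArg Prod.snd heq
        have k1 : c₀.1 = i-2 := by
          simp only [sh4] at e1; split_ifs at e1 <;> omega
        have k2 : c₀.2 = i+5 := by
          simp only [sh4] at e2; split_ifs at e2 <;> omega
        apply hstk c₀ hc₀
        have : (c₀.1+1, c₀.2-1) = (i-1, i+4) := Prod.ext_iff.2 ⟨by omega, by omega⟩
        rw [this]; exact hγ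
      · have hf := hfree hc₀ h1 h2 h3
        have hg := hfree hc₁ g1 g2 g3
        have hb := hd.1 c₀ hc₀
        have hb' := hd.1 c₁ hc₁
        have e1 : sh4 i c₀.1 + 1 = sh4 i c₁.1 := congrArg Prod.fst heq
        have e2 : sh4 i c₀.2 - 1 = sh4 i c₁.2 := congrArg Prod.snd heq
        have k1 : c₁.1 = c₀.1 + 1 := by
          simp only [sh4] at e1; split_ifs at e1 <;> omega
        have k2 : c₁.2 = c₀.2 - 1 := by
          simp only [sh4] at e2; split_ifs at e2 <;> omega
        exact hstk c₀ hc₀ (show (c₀.1+1, c₀.2-1) ∈ A from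
          (Prod.ext_iff.2 ⟨k1.symm, k2.symm⟩ : (c₀.1+1, c₀.2-1) = c₁) ▸ hc₁)
  -- cardinality
  have hnotmem : (i-1, i) ∉ (A \ {(i,i+2),(i+1,i+3),(i-1,i+4)}).image (am4 i) := by
    rw [Finset.mem_image]; rintro ⟨c₀, hc₀, heq⟩
    rw [Finset.mem_sdiff, Finset.mem_insert, Finset.mem_insert,
      Finset.mem_singleton, not_or, not_or] at hc₀
    have hf := hfree hc₀.1 hc₀.2.1 hc₀.2.2.1 hc₀.2.2.2
    have e1 : sh4 i c₀.1 = i-1 := congrArg Prod.fst heq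
    simp only [sh4] at e1; split_ifs at e1 <;> omega
  have hsub : ({(i,i+2),(i+1,i+3),(i-1,i+4)} : Finset (ℕ×ℕ)) ⊆ A := by
    intro x hx
    rw [Finset.mem_insert, Finset.mem_insert, Finset.mem_singleton] at hx
    rcases hx with rfl | rfl | rfl
    · exact hα
    · exact hβ
    · exact hγ
  have hinjOn : Set.InjOn (am4 i) ↑(A \ {(i,i+2),(i+1,i+3),(i-1,i+4)}) := by
    intro x hx y hy hxy
    rw [Finset.mem_coe, Finset.mem_sdiff, Finset.mem_insert, Finset.mem_insert,
      Finset.mem_singleton, not_or, not_or] at hx hy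
    have hf := hfree hx.1 hx.2.1 hx.2.2.1 hx.2.2.2
    have hg := hfree hy.1 hy.2.1 hy.2.2.1 hy.2.2.2
    have e1 : sh4 i x.1 = sh4 i y.1 := congrArg Prod.fst hxy
    have e2 : sh4 i x.2 = sh4 i y.2 := congrArg Prod.snd hxy
    refine Prod.ext_iff.2 ⟨?_, ?_⟩
    · simp only [sh4] at e1; split_ifs at e1 <;> omega
    · simp only [sh4] at e2; split_ifs at e2 <;> omega
  have hpair3 : ({(i,i+2),(i+1,i+3),(i-1,i+4)} : Finset (ℕ×ℕ)).card = 3 := by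
    rw [Finset.card_insert_of_notMem, Finset.card_insert_of_notMem,
      Finset.card_singleton]
    · rw [Finset.mem_singleton]
      intro h
      have : i+1 = i-1 := congrArg Prod.fst h
      omega
    · rw [Finset.mem_insert, Finset.mem_singleton]
      rintro (h | h)
      · have : i = i+1 := congrArg Prod.fst h
        omega
      · have : i = i-1 := congrArg Prod.fst h
        omega
  have hcardB : (B2 A i).card = s := by
    rw [B2, Finset.card_insert_of_notMem hnotmem, Finset.card_image_of_injOn hinjOn,
      Finset.card_sdiff_of_subset hsub, hpair3, hcard]
    omega
  -- countC1
  have hC1 : (B2 A i).filter Is1Arc =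
      insert (i-1,i) (((A \ {(i,i+2),(i+1,i+3),(i-1,i+4)}).filter Is1Arc).image (am4 i)) := by
    ext c
    simp only [Finset.mem_filter, Finset.mem_insert, Finset.mem_image]
    constructor
    · rintro ⟨hc, h1a⟩
      rcases mem_B2.1 hc with rfl | ⟨c₀, hc₀, h1, h2, h3, rfl⟩
      · exact Or.inl rfl
      · right
        have hf := hfree hc₀ h1 h2 h3
        have hb := hd.1 c₀ hc₀
        have h1a' : sh4 i c₀.2 = sh4 i c₀.1 + 1 := h1a
        have hone : c₀.2 = c₀.1 + 1 := by
          simp only [sh4] at h1a'; split_ifs at h1a' <;> omega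
        refine ⟨c₀, ⟨Finset.mem_sdiff.2 ⟨hc₀, ?_⟩, hone⟩, rfl⟩
        rw [Finset.mem_insert, Finset.mem_insert, Finset.mem_singleton]
        rintro (rfl | rfl | rfl)
        · exact absurd rfl h1
        · exact absurd rfl h2
        · exact absurd rfl h3
    · rintro (rfl | ⟨c₀, ⟨hc₀s, h1a⟩, rfl⟩)
      · refine ⟨mem_B2.2 (Or.inl rfl), ?_⟩
        show i = i-1+1
        omega
      · obtain ⟨hc₀, hne⟩ := Finset.mem_sdiff.1 hc₀s
        rw [Finset.mem_insert, Finset.mem_insert, Finset.mem_singleton,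
          not_or, not_or] at hne
        have hf := hfree hc₀ hne.1 hne.2.1 hne.2.2
        have h1a' : c₀.2 = c₀.1 + 1 := h1a
        refine ⟨mem_B2.2 (Or.inr ⟨c₀, hc₀, hne.1, hne.2.1, hne.2.2, rfl⟩), ?_⟩
        show sh4 i c₀.2 = sh4 i c₀.1 + 1
        simp only [sh4]; split_ifs <;> omega
  have hfilter_eq : (A \ {(i,i+2),(i+1,i+3),(i-1,i+4)}).filter Is1Arc
      = A.filter Is1Arc := by
    ext c
    simp only [Finset.mem_filter, Finset.mem_sdiff, Finset.mem_insert,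
      Finset.mem_singleton, not_or]
    constructor
    · rintro ⟨⟨hc, -⟩, h1⟩; exact ⟨hc, h1⟩
    · rintro ⟨hc, h1⟩
      refine ⟨⟨hc, ?_, ?_, ?_⟩, h1⟩
      · rintro rfl
        have : i+2 = i+1 := h1
        omega
      · rintro rfl
        have : i+3 = i+2 := h1
        omega
      · rintro rfl
        have : i+4 = i-1+1 := h1
        omega
  have hC1card : countC1 (B2 A i) = u₁ + 1 := by
    rw [countC1, hC1, Finset.card_insert_of_notMem, Finset.card_image_of_injOn,
      hfilter_eq]
    · rw [← countC1, hc1]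
    · exact hinjOn.mono (by
        intro x hx
        exact Finset.mem_coe.2 (Finset.filter_subset _ _ (Finset.mem_coe.1 hx)))
    · intro h
      apply hnotmem
      obtain ⟨c₀, hc₀, heq⟩ := Finset.mem_image.1 h
      exact Finset.mem_image.2 ⟨c₀, Finset.filter_subset _ _ hc₀, heq⟩
  -- countC2
  have hγn2 : ∀ {q : (ℕ×ℕ)×(ℕ×ℕ)}, q ∈ markersC2 A →
      q.1 ≠ (i-1,i+4) ∧ q.2 ≠ (i-1,i+4) := by
    intro q hq
    obtain ⟨-, -, q2a, q2b, -, -⟩ := mem_markersC2.1 hq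
    constructor
    · rintro h
      rw [h] at q2a
      have : i+4 = i-1+2 := q2a
      omega
    · rintro h
      rw [h] at q2b
      have : i+4 = i-1+2 := q2b
      omega
  have hexc : ∀ {q : (ℕ×ℕ)×(ℕ×ℕ)}, q ∈ markersC2 A → q ≠ ((i,i+2),(i+1,i+3)) →
      q.1 ≠ (i,i+2) ∧ q.1 ≠ (i+1,i+3) ∧ q.2 ≠ (i,i+2) ∧ q.2 ≠ (i+1,i+3) :=
    fun hq hqne => marker_ne_parts hd hα hβ hq hqne
  have hC2 : markersC2 (B2 A i) =
      (markersC2 A \ {((i,i+2),(i+1,i+3))}).image (fun p => (am4 i p.1, am4 i p.2)) := by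
    ext p
    constructor
    · intro hp
      obtain ⟨hp1, hp2, h2a, h2b, hlt, hcr⟩ := mem_markersC2.1 hp
      rcases mem_B2.1 hp1 with h | ⟨c₀, hc₀, h1, h2, h3, hpe⟩
      · exfalso
        have : i = i-1+2 := by rw [h] at h2a; exact h2a
        omega
      rcases mem_B2.1 hp2 with h | ⟨c₁, hc₁, g1, g2, g3, hpe'⟩
      · exfalso
        have : i = i-1+2 := by rw [h] at h2b; exact h2b
        omega
      have hf := hfree hc₀ h1 h2 h3
      have hg := hfree hc₁ g1 g2 g3
      have hb := hd.1 c₀ hc₀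
      have hb' := hd.1 c₁ hc₁
      have e2a : sh4 i c₀.2 = sh4 i c₀.1 + 2 := by rw [hpe] at h2a; exact h2a
      have d2a : c₀.2 = c₀.1 + 2 := by
        simp only [sh4] at e2a; split_ifs at e2a <;> omega
      have e2b : sh4 i c₁.2 = sh4 i c₁.1 + 2 := by rw [hpe'] at h2b; exact h2b
      have d2b : c₁.2 = c₁.1 + 2 := by
        simp only [sh4] at e2b; split_ifs at e2b <;> omega
      have hlt' : sh4 i c₀.1 < sh4 i c₁.1 := by rw [hpe, hpe'] at hlt; exact hlt
      have dlt : c₀.1 < c₁.1 := sh4_reflect_lt hf.1 hg.1 hlt'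
      have hcr' : Crosses (am4 i c₀) (am4 i c₁) := by rw [← hpe, ← hpe']; exact hcr
      have dcr : Crosses c₀ c₁ := by
        rcases hcr' with ⟨x1, x2, x3⟩ | ⟨x1, x2, x3⟩
        · exact Or.inl ⟨sh4_reflect_lt hf.1 hg.1 x1, sh4_reflect_lt hg.1 hf.2 x2,
            sh4_reflect_lt hf.2 hg.2 x3⟩
        · exact Or.inr ⟨sh4_reflect_lt hg.1 hf.1 x1, sh4_reflect_lt hf.1 hg.2 x2,
            sh4_reflect_lt hg.2 hf.2 x3⟩
      refine Finset.mem_image.2 ⟨(c₀, c₁), Finset.mem_sdiff.2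
        ⟨mem_markersC2.2 ⟨hc₀, hc₁, d2a, d2b, dlt, dcr⟩, ?_⟩, ?_⟩
      · rw [Finset.mem_singleton]
        intro h
        exact h1 (congrArg Prod.fst h)
      · exact Prod.ext_iff.2 ⟨hpe.symm, hpe'.symm⟩
    · intro hp
      obtain ⟨q, hq, rfl⟩ := Finset.mem_image.1 hp
      obtain ⟨hqm, hqne⟩ := Finset.mem_sdiff.1 hq
      rw [Finset.mem_singleton] at hqne
      obtain ⟨q1, q2, q3, q4⟩ := hexc hqm hqne
      obtain ⟨q5, q6⟩ := hγn2 hqm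
      obtain ⟨hq1, hq2, q2a, q2b, qlt, qcr⟩ := mem_markersC2.1 hqm
      have hf := hfree hq1 q1 q2 q5
      have hg := hfree hq2 q3 q4 q6
      have hb := hd.1 _ hq1
      have hb' := hd.1 _ hq2
      have d2a : q.1.2 = q.1.1 + 2 := q2a
      have d2b : q.2.2 = q.2.1 + 2 := q2b
      refine mem_markersC2.2 ⟨mem_B2.2 (Or.inr ⟨q.1, hq1, q1, q2, q5, rfl⟩),
        mem_B2.2 (Or.inr ⟨q.2, hq2, q3, q4, q6, rfl⟩), ?_, ?_, ?_, ?_⟩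
      · show sh4 i q.1.2 = sh4 i q.1.1 + 2
        simp only [sh4]; split_ifs <;> omega
      · show sh4 i q.2.2 = sh4 i q.2.1 + 2
        simp only [sh4]; split_ifs <;> omega
      · show sh4 i q.1.1 < sh4 i q.2.1
        simp only [sh4]; split_ifs <;> omega
      · rcases qcr with ⟨x1, x2, x3⟩ | ⟨x1, x2, x3⟩
        · refine Or.inl ⟨?_, ?_, ?_⟩ <;>
            (show sh4 i _ < sh4 i _; simp only [sh4]; split_ifs <;> omega)
        · refine Or.inr ⟨?_, ?_, ?_⟩ <;>
            (show sh4 i _ < sh4 i _; simp only [sh4]; split_ifs <;> omega)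
  have hmarksub : ({((i,i+2),(i+1,i+3))} : Finset ((ℕ×ℕ)×(ℕ×ℕ))) ⊆ markersC2 A := by
    intro x hx
    rw [Finset.mem_singleton] at hx
    subst hx
    exact mem_markersC2.2 ⟨hα, hβ, rfl, rfl, show i < i+1 by omega,
      Or.inl ⟨show i < i+1 by omega, show i+1 < i+2 by omega, show i+2 < i+3 by omega⟩⟩
  have hpinj : Set.InjOn (fun p : (ℕ×ℕ)×(ℕ×ℕ) => (am4 i p.1, am4 i p.2))
      ↑(markersC2 A \ {((i,i+2),(i+1,i+3))}) := by
    intro x hx y hy hxy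
    rw [Finset.mem_coe, Finset.mem_sdiff, Finset.mem_singleton] at hx hy
    obtain ⟨x1, x2, x3, x4⟩ := hexc hx.1 hx.2
    obtain ⟨x5, -⟩ := hγn2 hx.1
    obtain ⟨y1, y2, y3, y4⟩ := hexc hy.1 hy.2
    obtain ⟨y5, -⟩ := hγn2 hy.1
    obtain ⟨ex1, ex2, hx1A, hx2A⟩ := marker_eq hx.1
    obtain ⟨ey1, ey2, hy1A, hy2A⟩ := marker_eq hy.1
    have hfx := hfree (show x.1 ∈ A by rw [ex1]; exact hx1A) x1 x2 x5
    have hfy := hfree (show y.1 ∈ A by rw [ey1]; exact hy1A) y1 y2 y5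
    have e1 : sh4 i x.1.1 = sh4 i y.1.1 := congrArg (Prod.fst ∘ Prod.fst) hxy
    have exy : x.1.1 = y.1.1 := by
      simp only [sh4] at e1; split_ifs at e1 <;> omega
    rw [Prod.ext_iff, ex1, ex2, ey1, ey2, exy]
    exact ⟨rfl, rfl⟩
  have hC2card : countC2 (B2 A i) = u₂ := by
    rw [← markersC2_card, hC2, Finset.card_image_of_injOn hpinj,
      Finset.card_sdiff_of_subset hmarksub, Finset.card_singleton, markersC2_card, hc2]
    omega
  exact mem_ShapeF.2 ⟨⟨⟨hdiagB, hncB⟩, hmatB, hstkB⟩, hcardB, hC1card, hC2card⟩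

lemma us4_reflect_lt {j u v : ℕ} (h : us4 j u < us4 j v) : u < v := by
  simp only [us4] at h; split_ifs at h <;> omega

lemma us4_mono_lt {j u v : ℕ} (h : u < v) : us4 j u < us4 j v := by
  simp only [us4]; split_ifs <;> omega

lemma exp2_mem {k s u₁ u₂ : ℕ} (hk : 2 < k) {B : Finset (ℕ×ℕ)} {j : ℕ}
    (hB : B ∈ ShapeF k s (u₁+1) u₂) (h1arc : (j, j+1) ∈ B) :
    A2 B j ∈ ShapeF k (s+2) u₁ (u₂+1) ∧
      ((j+1,j+3),(j+2,j+4)) ∈ markersC2 (A2 B j) ∧ (j, j+5) ∈ A2 B j := by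
  obtain ⟨⟨⟨hd, hnc⟩, hmat, hstk⟩, hcard, hc1, hc2⟩ := mem_ShapeF.1 hB
  have hfree : ∀ {c : ℕ×ℕ}, c ∈ B → c ≠ (j,j+1) →
      (c.1 < j ∨ j+1 < c.1) ∧ (c.2 < j ∨ j+1 < c.2) :=
    fun hc h1 => free1' hd h1arc hc h1
  have hj1 : 1 ≤ j := (hd.1 _ h1arc).1
  have hj2 : j+1 ≤ 2*s := (hd.1 _ h1arc).2.2
  -- diagram
  have hdiagA : IsDiagram (2*(s+2)) (A2 B j) := by
    constructor
    · intro a ha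
      rcases mem_A2.1 ha with rfl | rfl | rfl | ⟨c₀, hc₀, h1, rfl⟩
      · exact ⟨hj1, by omega, by omega⟩
      · exact ⟨by omega, by omega, by omega⟩
      · exact ⟨by omega, by omega, by omega⟩
      · have hb := hd.1 c₀ hc₀
        have hf := hfree hc₀ h1
        simp only [aum4, us4]
        split_ifs <;> omega
    · intro a ha b hb hab
      rcases mem_A2.1 ha with rfl | rfl | rfl | ⟨c₀, hc₀, h1, rfl⟩ <;>
        rcases mem_A2.1 hb with rfl | rfl | rfl | ⟨c₁, hc₁, g1, rfl⟩ <;>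
        first
          | exact absurd rfl hab
          | exact ⟨by omega, by omega, by omega, by omega⟩
          | (have hg := hfree hc₁ g1
             simp only [aum4, us4]
             split_ifs <;> refine ⟨by omega, by omega, by omega, by omega⟩)
          | (have hf := hfree hc₀ h1
             simp only [aum4, us4]
             split_ifs <;> refine ⟨by omega, by omega, by omega, by omega⟩)
          | (have hne : c₀ ≠ c₁ := by rintro rfl; exact hab rfl
             obtain ⟨w1, w2, w3, w4⟩ := hd.2 c₀ hc₀ c₁ hc₁ hne
             simp only [aum4, us4]
             split_ifs <;> refine ⟨by omega, by omega, by omega, by omega⟩)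
  -- no k-crossing
  have hncA : ¬ HasKCrossing k (A2 B j) := by
    intro hA2
    apply hnc
    obtain ⟨f, hfA, hf1, hf2, hf3⟩ := hA2
    have hnoγ : ∀ t, f t ≠ (j,j+5) := by
      intro t ht
      obtain ⟨t₁, t₂, hne₁, hne₂, hlt12⟩ := fin_two_other hk t
      have hnolt : ∀ t', t' < t → False := by
        intro t' hlt
        have b0 := hf1 t' t hlt
        have b1 := hf2 t' t hlt
        have b2 := hf3 t t'
        rw [ht] at b0 b1 b2
        have b0' : (f t').1 < j := b0
        have b1' : (f t').2 < j+5 := b1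
        have b2' : j < (f t').2 := b2
        rcases mem_A2.1 (hfA t') with e | e | e | ⟨c₀, hc₀, h1, e⟩
        · have : (f t').1 = j := congrArg Prod.fst e
          omega
        · have : (f t').1 = j+1 := congrArg Prod.fst e
          omega
        · have : (f t').1 = j+2 := congrArg Prod.fst e
          omega
        · have hf := hfree hc₀ h1
          have e2 : (f t').2 = us4 j c₀.2 := congrArg Prod.snd e
          simp only [us4] at e2; split_ifs at e2 <;> omega
      have hnogt : ∀ t', t < t' → False := by
        intro t' hlt
        have b0 := hf1 t t' hlt
        have b1 := hf3 t' t
        have b2 := hf2 t t' hlt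
        rw [ht] at b0 b1 b2
        have b0' : j < (f t').1 := b0
        have b1' : (f t').1 < j+5 := b1
        have b2' : j+5 < (f t').2 := b2
        rcases mem_A2.1 (hfA t') with e | e | e | ⟨c₀, hc₀, h1, e⟩
        · have : (f t').1 = j := congrArg Prod.fst e
          omega
        · have : (f t').2 = j+3 := congrArg Prod.snd e
          omega
        · have : (f t').2 = j+4 := congrArg Prod.snd e
          omega
        · have hf := hfree hc₀ h1
          have e1 : (f t').1 = us4 j c₀.1 := congrArg Prod.fst e
          simp only [us4] at e1; split_ifs at e1 <;> omega
      rcases lt_or_gt_of_ne hne₁ with h | h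
      · exact hnolt t₁ h
      · exact hnogt t₁ h
    have hnoα : ∀ t, f t ≠ (j+1,j+3) := by
      intro t ht
      obtain ⟨t₁, t₂, hne₁, hne₂, hlt12⟩ := fin_two_other hk t
      have hnolt : ∀ t', t' < t → False := by
        intro t' hlt
        have b1 := hf2 t' t hlt
        have b2 := hf3 t t'
        rw [ht] at b1 b2
        have b1' : (f t').2 < j+3 := b1
        have b2' : j+1 < (f t').2 := b2
        rcases mem_A2.1 (hfA t') with e | e | e | ⟨c₀, hc₀, h1, e⟩
        · have : (f t').2 = j+5 := congrArg Prod.snd e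
          omega
        · have : (f t').2 = j+3 := congrArg Prod.snd e
          omega
        · have : (f t').2 = j+4 := congrArg Prod.snd e
          omega
        · have hf := hfree hc₀ h1
          have e2 : (f t').2 = us4 j c₀.2 := congrArg Prod.snd e
          simp only [us4] at e2; split_ifs at e2 <;> omega
      have hgt : ∀ t', t < t' → f t' = (j+2,j+4) := by
        intro t' hlt
        have b0 := hf1 t t' hlt
        have b1 := hf3 t' t
        rw [ht] at b0 b1
        have b0' : j+1 < (f t').1 := b0
        have b1' : (f t').1 < j+3 := b1
        rcases mem_A2.1 (hfA t') with e | e | e | ⟨c₀, hc₀, h1, e⟩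
        · exfalso
          have : (f t').1 = j := congrArg Prod.fst e
          omega
        · exfalso
          have : (f t').1 = j+1 := congrArg Prod.fst e
          omega
        · exact e
        · exfalso
          have hf := hfree hc₀ h1
          have e1 : (f t').1 = us4 j c₀.1 := congrArg Prod.fst e
          simp only [us4] at e1; split_ifs at e1 <;> omega
      have ht₁ : t < t₁ := by
        rcases lt_or_gt_of_ne hne₁ with h | h
        · exact absurd h (fun hh => hnolt t₁ hh)
        · exact h
      have ht₂ : t < t₂ := by
        rcases lt_or_gt_of_ne hne₂ with h | h
        · exact absurd h (fun hh => hnolt t₂ hh)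
        · exact h
      have e1 := hgt t₁ ht₁
      have e2 := hgt t₂ ht₂
      have := hf1 t₁ t₂ hlt12
      rw [e1, e2] at this
      exact absurd (this : j+2 < j+2) (by omega)
    have hnoβ : ∀ t, f t ≠ (j+2,j+4) := by
      intro t ht
      obtain ⟨t₁, t₂, hne₁, hne₂, hlt12⟩ := fin_two_other hk t
      have hnogt : ∀ t', t < t' → False := by
        intro t' hlt
        have b0 := hf1 t t' hlt
        have b1 := hf3 t' t
        rw [ht] at b0 b1
        have b0' : j+2 < (f t').1 := b0
        have b1' : (f t').1 < j+4 := b1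
        rcases mem_A2.1 (hfA t') with e | e | e | ⟨c₀, hc₀, h1, e⟩
        · have : (f t').1 = j := congrArg Prod.fst e
          omega
        · have : (f t').1 = j+1 := congrArg Prod.fst e
          omega
        · have : (f t').1 = j+2 := congrArg Prod.fst e
          omega
        · have hf := hfree hc₀ h1
          have e1 : (f t').1 = us4 j c₀.1 := congrArg Prod.fst e
          simp only [us4] at e1; split_ifs at e1 <;> omega
      have hltc : ∀ t', t' < t → f t' = (j+1,j+3) := by
        intro t' hlt
        have b1 := hf2 t' t hlt
        have b2 := hf3 t t'
        rw [ht] at b1 b2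
        have b1' : (f t').2 < j+4 := b1
        have b2' : j+2 < (f t').2 := b2
        rcases mem_A2.1 (hfA t') with e | e | e | ⟨c₀, hc₀, h1, e⟩
        · exfalso
          have : (f t').2 = j+5 := congrArg Prod.snd e
          omega
        · exact e
        · exfalso
          have : (f t').2 = j+4 := congrArg Prod.snd e
          omega
        · exfalso
          have hf := hfree hc₀ h1
          have e2 : (f t').2 = us4 j c₀.2 := congrArg Prod.snd e
          simp only [us4] at e2; split_ifs at e2 <;> omega
      have ht₁ : t₁ < t := by
        rcases lt_or_gt_of_ne hne₁ with h | h
        · exact h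
        · exact absurd h (fun hh => hnogt t₁ hh)
      have ht₂ : t₂ < t := by
        rcases lt_or_gt_of_ne hne₂ with h | h
        · exact h
        · exact absurd h (fun hh => hnogt t₂ hh)
      have e1 := hltc t₁ ht₁
      have e2 := hltc t₂ ht₂
      have := hf1 t₁ t₂ hlt12
      rw [e1, e2] at this
      exact absurd (this : j+1 < j+1) (by omega)
    have hold : ∀ t, ∃ c₀, c₀ ∈ B ∧ c₀ ≠ (j,j+1) ∧ f t = aum4 j c₀ := by
      intro t
      rcases mem_A2.1 (hfA t) with h | h | h | h
      · exact absurd h (hnoγ t)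
      · exact absurd h (hnoα t)
      · exact absurd h (hnoβ t)
      · exact h
    choose g hg1 hg2 hg3 using hold
    refine ⟨g, hg1, ?_, ?_, ?_⟩
    · intro a b hab
      have h := hf1 a b hab
      rw [hg3 a, hg3 b] at h
      exact us4_reflect_lt h
    · intro a b hab
      have h := hf2 a b hab
      rw [hg3 a, hg3 b] at h
      exact us4_reflect_lt h
    · intro a b
      have h := hf3 a b
      rw [hg3 a, hg3 b] at h
      exact us4_reflect_lt h
  -- matching
  have hmatA : IsMatchingOn (2*(s+2)) (A2 B j) := by
    intro v hv1 hv2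
    rcases Nat.lt_or_ge v j with hv | hv
    · obtain ⟨a, haB, hva⟩ := hmat v hv1 (by omega)
      have hne : a ≠ (j,j+1) := by
        rintro rfl
        have : v = j ∨ v = j+1 := hva
        omega
      refine ⟨aum4 j a, mem_A2.2 (Or.inr (Or.inr (Or.inr ⟨a, haB, hne, rfl⟩))), ?_⟩
      have hf := hfree haB hne
      have hva' : v = a.1 ∨ v = a.2 := hva
      show v = us4 j a.1 ∨ v = us4 j a.2
      simp only [us4]; split_ifs <;> omega
    · rcases Nat.lt_or_ge (j+5) v with hv' | hv'
      · obtain ⟨a, haB, hva⟩ := hmat (v-4) (by omega) (by omega)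
        have hne : a ≠ (j,j+1) := by
          rintro rfl
          have : v-4 = j ∨ v-4 = j+1 := hva
          omega
        refine ⟨aum4 j a, mem_A2.2 (Or.inr (Or.inr (Or.inr ⟨a, haB, hne, rfl⟩))), ?_⟩
        have hf := hfree haB hne
        have hva' : v-4 = a.1 ∨ v-4 = a.2 := hva
        show v = us4 j a.1 ∨ v = us4 j a.2
        simp only [us4]; split_ifs <;> omega
      · by_cases hvv : v = j ∨ v = j+5
        · exact ⟨(j,j+5), mem_A2.2 (Or.inl rfl), hvv⟩
        by_cases hvv' : v = j+1 ∨ v = j+3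
        · exact ⟨(j+1,j+3), mem_A2.2 (Or.inr (Or.inl rfl)), hvv'⟩
        · exact ⟨(j+2,j+4), mem_A2.2 (Or.inr (Or.inr (Or.inl rfl))),
            show v = j+2 ∨ v = j+4 by omega⟩
  -- stack-free
  have hstkA : ∀ a ∈ A2 B j, (a.1+1, a.2-1) ∉ A2 B j := by
    intro a ha hcon
    rcases mem_A2.1 ha with rfl | rfl | rfl | ⟨c₀, hc₀, h1, rfl⟩
    · -- a = (j, j+5), inner = (j+1, j+4)
      rcases mem_A2.1 hcon with h | h | h | ⟨c₁, hc₁, g1, h⟩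
      · exact absurd (congrArg Prod.fst h : j+1 = j) (by omega)
      · exact absurd (congrArg Prod.snd h : j+5-1 = j+3) (by omega)
      · exact absurd (congrArg Prod.fst h : j+1 = j+2) (by omega)
      · have hg := hfree hc₁ g1
        have e1 : j+1 = us4 j c₁.1 := congrArg Prod.fst h
        simp only [us4] at e1; split_ifs at e1 <;> omega
    · -- a = (j+1, j+3), inner = (j+2, j+2)
      rcases mem_A2.1 hcon with h | h | h | ⟨c₁, hc₁, g1, h⟩
      · exact absurd (congrArg Prod.fst h : j+1+1 = j) (by omega)
      · exact absurd (congrArg Prod.fst h : j+1+1 = j+1) (by omega)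
      · exact absurd (congrArg Prod.snd h : j+3-1 = j+4) (by omega)
      · have hg := hfree hc₁ g1
        have e1 : j+1+1 = us4 j c₁.1 := congrArg Prod.fst h
        simp only [us4] at e1; split_ifs at e1 <;> omega
    · -- a = (j+2, j+4), inner = (j+3, j+3)
      rcases mem_A2.1 hcon with h | h | h | ⟨c₁, hc₁, g1, h⟩
      · exact absurd (congrArg Prod.fst h : j+2+1 = j) (by omega)
      · exact absurd (congrArg Prod.fst h : j+2+1 = j+1) (by omega)
      · exact absurd (congrArg Prod.fst h : j+2+1 = j+2) (by omega)
      · have hg := hfree hc₁ g1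
        have e1 : j+2+1 = us4 j c₁.1 := congrArg Prod.fst h
        simp only [us4] at e1; split_ifs at e1 <;> omega
    · -- a old
      have hf := hfree hc₀ h1
      have hb := hd.1 c₀ hc₀
      rcases mem_A2.1 hcon with h | h | h | ⟨c₁, hc₁, g1, h⟩
      · -- inner = (j, j+5): c₀ = (j-1, j+2): stack with the 1-arc in B
        have e1 : us4 j c₀.1 + 1 = j := congrArg Prod.fst h
        have e2 : us4 j c₀.2 - 1 = j+5 := congrArg Prod.snd h
        have k1 : c₀.1 = j-1 := by
          simp only [us4] at e1; split_ifs at e1 <;> omega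
        have k2 : c₀.2 = j+2 := by
          simp only [us4] at e2; split_ifs at e2 <;> omega
        apply hstk c₀ hc₀
        have : (c₀.1+1, c₀.2-1) = (j, j+1) := Prod.ext_iff.2 ⟨by omega, by omega⟩
        rw [this]; exact h1arc
      · have e1 : us4 j c₀.1 + 1 = j+1 := congrArg Prod.fst h
        simp only [us4] at e1; split_ifs at e1 <;> omega
      · have e1 : us4 j c₀.1 + 1 = j+2 := congrArg Prod.fst h
        simp only [us4] at e1; split_ifs at e1 <;> omega
      · have hg := hfree hc₁ g1
        have hb' := hd.1 c₁ hc₁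
        have e1 : us4 j c₀.1 + 1 = us4 j c₁.1 := congrArg Prod.fst h
        have e2 : us4 j c₀.2 - 1 = us4 j c₁.2 := congrArg Prod.snd h
        have k1 : c₁.1 = c₀.1 + 1 := by
          simp only [us4] at e1; split_ifs at e1 <;> omega
        have k2 : c₁.2 = c₀.2 - 1 := by
          simp only [us4] at e2; split_ifs at e2 <;> omega
        exact hstk c₀ hc₀ (show (c₀.1+1, c₀.2-1) ∈ B from
          (Prod.ext_iff.2 ⟨k1.symm, k2.symm⟩ : (c₀.1+1, c₀.2-1) = c₁) ▸ hc₁)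
  -- cardinality
  have haim : ∀ c₀ ∈ B \ {(j,j+1)},
      (aum4 j c₀).1 ≠ j ∧ (aum4 j c₀).1 ≠ j+1 ∧ (aum4 j c₀).1 ≠ j+2 := by
    intro c₀ hc₀
    rw [Finset.mem_sdiff, Finset.mem_singleton] at hc₀
    have hf := hfree hc₀.1 hc₀.2
    refine ⟨?_, ?_, ?_⟩ <;> (show us4 j _ ≠ _; simp only [us4]; split_ifs <;> omega)
  have hgnotmem : (j,j+5) ∉ (B \ {(j,j+1)}).image (aum4 j) := by
    rw [Finset.mem_image]; rintro ⟨c₀, hc₀, heq⟩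
    exact absurd (congrArg Prod.fst heq : (aum4 j c₀).1 = j) (haim c₀ hc₀).1
  have hanotmem : (j+1,j+3) ∉ (B \ {(j,j+1)}).image (aum4 j) := by
    rw [Finset.mem_image]; rintro ⟨c₀, hc₀, heq⟩
    exact absurd (congrArg Prod.fst heq : (aum4 j c₀).1 = j+1) (haim c₀ hc₀).2.1
  have hbnotmem : (j+2,j+4) ∉ (B \ {(j,j+1)}).image (aum4 j) := by
    rw [Finset.mem_image]; rintro ⟨c₀, hc₀, heq⟩
    exact absurd (congrArg Prod.fst heq : (aum4 j c₀).1 = j+2) (haim c₀ hc₀).2.2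
  have haum4inj : Set.InjOn (aum4 j) ↑(B \ {(j,j+1)}) := by
    intro x _ y _ hxy
    have e1 : us4 j x.1 = us4 j y.1 := congrArg Prod.fst hxy
    have e2 : us4 j x.2 = us4 j y.2 := congrArg Prod.snd hxy
    refine Prod.ext_iff.2 ⟨?_, ?_⟩
    · simp only [us4] at e1; split_ifs at e1 <;> omega
    · simp only [us4] at e2; split_ifs at e2 <;> omega
  have h1sub : ({(j,j+1)} : Finset (ℕ×ℕ)) ⊆ B := by
    intro x hx; rw [Finset.mem_singleton] at hx; rw [hx]; exact h1arc
  have hg_notmem2 : (j,j+5) ∉ insert (j+1,j+3) (insert (j+2,j+4)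
      ((B \ {(j,j+1)}).image (aum4 j))) := by
    rw [Finset.mem_insert, Finset.mem_insert]
    rintro (h | h | h)
    · exact absurd (congrArg Prod.fst h : j = j+1) (by omega)
    · exact absurd (congrArg Prod.fst h : j = j+2) (by omega)
    · exact hgnotmem h
  have ha_notmem2 : (j+1,j+3) ∉ insert (j+2,j+4)
      ((B \ {(j,j+1)}).image (aum4 j)) := by
    rw [Finset.mem_insert]
    rintro (h | h)
    · exact absurd (congrArg Prod.fst h : j+1 = j+2) (by omega)
    · exact hanotmem h
  have hcardA : (A2 B j).card = s+2 := by
    rw [A2, Finset.card_insert_of_notMem hg_notmem2,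
      Finset.card_insert_of_notMem ha_notmem2,
      Finset.card_insert_of_notMem hbnotmem,
      Finset.card_image_of_injOn haum4inj, Finset.card_sdiff_of_subset h1sub,
      Finset.card_singleton, hcard]
    omega
  -- countC1
  have hC1A : (A2 B j).filter Is1Arc =
      ((B.filter Is1Arc) \ {(j,j+1)}).image (aum4 j) := by
    ext c
    simp only [Finset.mem_filter, Finset.mem_image, Finset.mem_sdiff,
      Finset.mem_singleton]
    constructor
    · rintro ⟨hc, h1a⟩
      rcases mem_A2.1 hc with rfl | rfl | rfl | ⟨c₀, hc₀, h1, rfl⟩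
      · exfalso; have h' : j+5 = j+1 := h1a; omega
      · exfalso; have h' : j+3 = j+1+1 := h1a; omega
      · exfalso; have h' : j+4 = j+2+1 := h1a; omega
      · have hf := hfree hc₀ h1
        have h1a' : us4 j c₀.2 = us4 j c₀.1 + 1 := h1a
        have hone : c₀.2 = c₀.1 + 1 := by
          simp only [us4] at h1a'; split_ifs at h1a' <;> omega
        exact ⟨c₀, ⟨⟨hc₀, hone⟩, h1⟩, rfl⟩
    · rintro ⟨c₀, ⟨⟨hc₀, hone⟩, h1⟩, rfl⟩
      have hf := hfree hc₀ h1
      have hone' : c₀.2 = c₀.1 + 1 := hone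
      refine ⟨mem_A2.2 (Or.inr (Or.inr (Or.inr ⟨c₀, hc₀, h1, rfl⟩))), ?_⟩
      show us4 j c₀.2 = us4 j c₀.1 + 1
      simp only [us4]; split_ifs <;> omega
  have hC1cardA : countC1 (A2 B j) = u₁ := by
    rw [countC1, hC1A, Finset.card_image_of_injOn, Finset.card_sdiff_of_subset,
      Finset.card_singleton, ← countC1, hc1]
    · omega
    · intro x hx; rw [Finset.mem_singleton] at hx; rw [hx]
      exact Finset.mem_filter.2 ⟨h1arc, rfl⟩
    · exact haum4inj.mono (by
        intro x hx
        rw [Finset.mem_coe, Finset.mem_sdiff, Finset.mem_singleton] at hx ⊢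
        exact ⟨Finset.mem_filter.1 hx.1 |>.1, hx.2⟩)
  -- countC2
  have hC2A : markersC2 (A2 B j) = insert ((j+1,j+3),(j+2,j+4))
      ((markersC2 B).image (fun p => (aum4 j p.1, aum4 j p.2))) := by
    ext p
    simp only [Finset.mem_insert, Finset.mem_image]
    constructor
    · intro hp
      obtain ⟨hp1, hp2, h2a, h2b, hlt, hcr⟩ := mem_markersC2.1 hp
      have hcr1 : p.1.1 < p.2.1 ∧ p.2.1 < p.1.2 ∧ p.1.2 < p.2.2 := by
        rcases hcr with h | h
        · exact h
        · exact absurd hlt (by omega)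
      rcases mem_A2.1 hp1 with e1 | e1 | e1 | ⟨c₀, hc₀, h1, e1⟩
      · -- p.1 = γ': not a 2-arc
        exfalso
        have u1 : p.1.1 = j := congrArg Prod.fst e1
        have u2 : p.1.2 = j+5 := congrArg Prod.snd e1
        have : p.1.2 = p.1.1 + 2 := h2a
        omega
      · -- p.1 = α': p.2 must be β'
        have u1 : p.1.1 = j+1 := congrArg Prod.fst e1
        have u2 : p.1.2 = j+3 := congrArg Prod.snd e1
        have h2a1 : p.2.1 = j+2 := by omega
        rcases mem_A2.1 hp2 with e2 | e2 | e2 | ⟨c₁, hc₁, g1, e2⟩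
        · exfalso
          have u3 : p.2.1 = j := congrArg Prod.fst e2
          omega
        · exfalso
          have u3 : p.2.1 = j+1 := congrArg Prod.fst e2
          omega
        · exact Or.inl (Prod.ext_iff.2 ⟨e1, e2⟩)
        · exfalso
          have hg := hfree hc₁ g1
          have h5 : p.2.1 = us4 j c₁.1 := congrArg Prod.fst e2
          have : us4 j c₁.1 = j+2 := by omega
          simp only [us4] at this; split_ifs at this <;> omega
      · -- p.1 = β': p.2.1 = j+3: impossible
        exfalso
        have u1 : p.1.1 = j+2 := congrArg Prod.fst e1
        have u2 : p.1.2 = j+4 := congrArg Prod.snd e1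
        have h2a1 : p.2.1 = j+3 := by omega
        rcases mem_A2.1 hp2 with e2 | e2 | e2 | ⟨c₁, hc₁, g1, e2⟩
        · have u3 : p.2.1 = j := congrArg Prod.fst e2; omega
        · have u3 : p.2.1 = j+1 := congrArg Prod.fst e2; omega
        · have u3 : p.2.1 = j+2 := congrArg Prod.fst e2; omega
        · have hg := hfree hc₁ g1
          have h5 : p.2.1 = us4 j c₁.1 := congrArg Prod.fst e2
          have : us4 j c₁.1 = j+3 := by omega
          simp only [us4] at this; split_ifs at this <;> omega
      · -- p.1 old
        have hf := hfree hc₀ h1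
        rcases mem_A2.1 hp2 with e2 | e2 | e2 | ⟨c₁, hc₁, g1, e2⟩
        · -- p.2 = γ': not a 2-arc
          exfalso
          have u1 : p.2.1 = j := congrArg Prod.fst e2
          have u2 : p.2.2 = j+5 := congrArg Prod.snd e2
          have : p.2.2 = p.2.1 + 2 := h2b
          omega
        · -- p.2 = α': p.1.2 = j+2: impossible for old
          exfalso
          have u1 : p.2.1 = j+1 := congrArg Prod.fst e2
          have u2 : p.2.2 = j+3 := congrArg Prod.snd e2
          have h5 : p.1.2 = us4 j c₀.2 := congrArg Prod.snd e1
          have : us4 j c₀.2 = j+2 := by omega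
          simp only [us4] at this; split_ifs at this <;> omega
        · -- p.2 = β': p.1.2 = j+3: impossible for old
          exfalso
          have u1 : p.2.1 = j+2 := congrArg Prod.fst e2
          have u2 : p.2.2 = j+4 := congrArg Prod.snd e2
          have h5 : p.1.2 = us4 j c₀.2 := congrArg Prod.snd e1
          have : us4 j c₀.2 = j+3 := by omega
          simp only [us4] at this; split_ifs at this <;> omega
        · -- both old
          right
          have hg := hfree hc₁ g1
          have u11 : p.1.1 = us4 j c₀.1 := congrArg Prod.fst e1
          have u12 : p.1.2 = us4 j c₀.2 := congrArg Prod.snd e1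
          have u21 : p.2.1 = us4 j c₁.1 := congrArg Prod.fst e2
          have u22 : p.2.2 = us4 j c₁.2 := congrArg Prod.snd e2
          have d2a : c₀.2 = c₀.1 + 2 := by
            have : p.1.2 = p.1.1 + 2 := h2a
            rw [u11, u12] at this
            simp only [us4] at this; split_ifs at this <;> omega
          have d2b : c₁.2 = c₁.1 + 2 := by
            have : p.2.2 = p.2.1 + 2 := h2b
            rw [u21, u22] at this
            simp only [us4] at this; split_ifs at this <;> omega
          refine ⟨(c₀, c₁), mem_markersC2.2 ⟨hc₀, hc₁, d2a, d2b, ?_, Or.inl ⟨?_, ?_, ?_⟩⟩, ?_⟩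
          · exact us4_reflect_lt (by rw [← u11, ← u21]; exact hlt)
          · exact us4_reflect_lt (by rw [← u11, ← u21]; exact hcr1.1)
          · exact us4_reflect_lt (by rw [← u21, ← u12]; exact hcr1.2.1)
          · exact us4_reflect_lt (by rw [← u12, ← u22]; exact hcr1.2.2)
          · exact (Prod.ext_iff.2 ⟨e1.symm, e2.symm⟩ :
              ((aum4 j c₀, aum4 j c₁) : (ℕ×ℕ)×(ℕ×ℕ)) = p)
    · rintro (rfl | ⟨q, hq, rfl⟩)
      · refine mem_markersC2.2 ⟨mem_A2.2 (Or.inr (Or.inl rfl)),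
          mem_A2.2 (Or.inr (Or.inr (Or.inl rfl))),
          rfl, rfl, show j+1 < j+2 by omega,
          Or.inl ⟨show j+1 < j+2 by omega, show j+2 < j+3 by omega,
            show j+3 < j+4 by omega⟩⟩
      · obtain ⟨hq1, hq2, q2a, q2b, qlt, qcr⟩ := mem_markersC2.1 hq
        have hne1 : q.1 ≠ (j,j+1) := by
          intro h
          have h1 : q.1.2 = q.1.1 + 1 := by rw [h]
          have h2 : q.1.2 = q.1.1 + 2 := q2a
          omega
        have hne2 : q.2 ≠ (j,j+1) := by
          intro h
          have h1 : q.2.2 = q.2.1 + 1 := by rw [h]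
          have h2 : q.2.2 = q.2.1 + 2 := q2b
          omega
        have hf := hfree hq1 hne1
        have hg := hfree hq2 hne2
        have d2a : q.1.2 = q.1.1 + 2 := q2a
        have d2b : q.2.2 = q.2.1 + 2 := q2b
        refine mem_markersC2.2 ⟨mem_A2.2 (Or.inr (Or.inr (Or.inr ⟨q.1, hq1, hne1, rfl⟩))),
          mem_A2.2 (Or.inr (Or.inr (Or.inr ⟨q.2, hq2, hne2, rfl⟩))), ?_, ?_, ?_, ?_⟩
        · show us4 j q.1.2 = us4 j q.1.1 + 2
          simp only [us4]; split_ifs <;> omega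
        · show us4 j q.2.2 = us4 j q.2.1 + 2
          simp only [us4]; split_ifs <;> omega
        · exact us4_mono_lt qlt
        · rcases qcr with ⟨x1, x2, x3⟩ | ⟨x1, x2, x3⟩
          · exact Or.inl ⟨us4_mono_lt x1, us4_mono_lt x2, us4_mono_lt x3⟩
          · exact Or.inr ⟨us4_mono_lt x1, us4_mono_lt x2, us4_mono_lt x3⟩
  have hC2cardA : countC2 (A2 B j) = u₂ + 1 := by
    rw [← markersC2_card, hC2A, Finset.card_insert_of_notMem,
      Finset.card_image_of_injOn, markersC2_card, hc2]
    · intro x hx y hy hxy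
      have e1 : aum4 j x.1 = aum4 j y.1 := congrArg Prod.fst hxy
      have e2 : aum4 j x.2 = aum4 j y.2 := congrArg Prod.snd hxy
      have f1 : us4 j x.1.1 = us4 j y.1.1 := congrArg Prod.fst e1
      have f2 : us4 j x.1.2 = us4 j y.1.2 := congrArg Prod.snd e1
      have f3 : us4 j x.2.1 = us4 j y.2.1 := congrArg Prod.fst e2
      have f4 : us4 j x.2.2 = us4 j y.2.2 := congrArg Prod.snd e2
      refine Prod.ext_iff.2 ⟨Prod.ext_iff.2 ⟨?_, ?_⟩, Prod.ext_iff.2 ⟨?_, ?_⟩⟩ <;>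
        (first
          | (simp only [us4] at f1; split_ifs at f1 <;> omega)
          | (simp only [us4] at f2; split_ifs at f2 <;> omega)
          | (simp only [us4] at f3; split_ifs at f3 <;> omega)
          | (simp only [us4] at f4; split_ifs at f4 <;> omega))
    · rw [Finset.mem_image]
      rintro ⟨q, hq, heq⟩
      obtain ⟨hq1, -, q2a, -, -, -⟩ := mem_markersC2.1 hq
      have hne1 : q.1 ≠ (j,j+1) := by
        intro h
        have h1 : q.1.2 = q.1.1 + 1 := by rw [h]
        have h2 : q.1.2 = q.1.1 + 2 := q2a
        omega
      have hf := hfree hq1 hne1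
      have : us4 j q.1.1 = j+1 := congrArg (Prod.fst ∘ Prod.fst) heq
      simp only [us4] at this; split_ifs at this <;> omega
  refine ⟨mem_ShapeF.2 ⟨⟨⟨hdiagA, hncA⟩, hmatA, hstkA⟩, hcardA, hC1cardA, hC2cardA⟩,
    ?_, mem_A2.2 (Or.inl rfl)⟩
  rw [hC2A]
  exact Finset.mem_insert_self _ _

lemma A2_B2 {n : ℕ} {A : Finset (ℕ×ℕ)} {i : ℕ} (hd : IsDiagram n A)
    (hα : (i,i+2) ∈ A) (hβ : (i+1,i+3) ∈ A) (hγ : (i-1,i+4) ∈ A) :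
    A2 (B2 A i) (i-1) = A := by
  have hi1 : 1 ≤ i-1 := (hd.1 _ hγ).1
  have eγ : ((i-1 : ℕ), (i-1)+5) = ((i-1 : ℕ), i+4) := Prod.ext_iff.2 ⟨rfl, by omega⟩
  have eα : ((i-1 : ℕ)+1, (i-1)+3) = (i, i+2) := Prod.ext_iff.2 ⟨by omega, by omega⟩
  have eβ : ((i-1 : ℕ)+2, (i-1)+4) = (i+1, i+3) := Prod.ext_iff.2 ⟨by omega, by omega⟩
  have e1a : ((i-1 : ℕ), (i-1)+1) = (i-1, i) := Prod.ext_iff.2 ⟨rfl, by omega⟩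
  ext c
  rw [mem_A2, eγ, eα, eβ, e1a]
  constructor
  · rintro (rfl | rfl | rfl | ⟨c₀, hc₀, hne, rfl⟩)
    · exact hγ
    · exact hα
    · exact hβ
    · rcases mem_B2.1 hc₀ with rfl | ⟨c₁, hc₁, h1, h2, h3, rfl⟩
      · exact absurd rfl hne
      · have hf := free2 hd hα hβ hγ hc₁ h1 h2 h3
        have heq : aum4 (i-1) (am4 i c₁) = c₁ := by
          refine Prod.ext_iff.2 ⟨?_, ?_⟩ <;>
            (show us4 (i-1) (sh4 i _) = _; simp only [us4, sh4]; split_ifs <;> omega)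
        rw [heq]; exact hc₁
  · intro hc
    by_cases h3 : c = (i-1,i+4)
    · exact Or.inl h3
    by_cases h1 : c = (i,i+2)
    · exact Or.inr (Or.inl h1)
    by_cases h2 : c = (i+1,i+3)
    · exact Or.inr (Or.inr (Or.inl h2))
    have hf := free2 hd hα hβ hγ hc h1 h2 h3
    refine Or.inr (Or.inr (Or.inr ⟨am4 i c,
      mem_B2.2 (Or.inr ⟨c, hc, h1, h2, h3, rfl⟩), ?_, ?_⟩))
    · intro h
      have : sh4 i c.1 = i-1 := congrArg Prod.fst h
      simp only [sh4] at this; split_ifs at this <;> omega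
    · have heq : aum4 (i-1) (am4 i c) = c := by
        refine Prod.ext_iff.2 ⟨?_, ?_⟩ <;>
          (show us4 (i-1) (sh4 i _) = _; simp only [us4, sh4]; split_ifs <;> omega)
      exact heq.symm

lemma B2_A2 {n : ℕ} {B : Finset (ℕ×ℕ)} {j : ℕ} (hd : IsDiagram n B)
    (h1arc : (j,j+1) ∈ B) : B2 (A2 B j) (j+1) = B := by
  have hid : ∀ c : ℕ×ℕ, am4 (j+1) (aum4 j c) = c := by
    intro c
    refine Prod.ext_iff.2 ⟨?_, ?_⟩ <;>
      (show sh4 (j+1) (us4 j _) = _; simp only [us4, sh4]; split_ifs <;> omega)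
  have e1a : ((j:ℕ)+1-1, j+1) = (j, j+1) := Prod.ext_iff.2 ⟨by omega, rfl⟩
  have eγ : ((j:ℕ)+1-1, j+1+4) = (j, j+5) := Prod.ext_iff.2 ⟨by omega, by omega⟩
  ext c
  rw [mem_B2, e1a, eγ]
  constructor
  · rintro (rfl | ⟨c₀, hc₀, h1, h2, h3, rfl⟩)
    · exact h1arc
    · rcases mem_A2.1 hc₀ with rfl | rfl | rfl | ⟨c₁, hc₁, hne, rfl⟩
      · exact absurd rfl h3
      · exact absurd (show ((j:ℕ)+1, j+3) = (j+1, j+1+2) from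
          Prod.ext_iff.2 ⟨rfl, by omega⟩) h1
      · exact absurd (show ((j:ℕ)+2, j+4) = (j+1+1, j+1+3) from
          Prod.ext_iff.2 ⟨by omega, by omega⟩) h2
      · rw [hid c₁]; exact hc₁
  · intro hc
    by_cases h0 : c = (j,j+1)
    · exact Or.inl h0
    have hf := free1' hd h1arc hc h0
    refine Or.inr ⟨aum4 j c, mem_A2.2 (Or.inr (Or.inr (Or.inr ⟨c, hc, h0, rfl⟩))),
      ?_, ?_, ?_, ?_⟩
    · intro h
      have : us4 j c.1 = j+1 := congrArg Prod.fst h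
      simp only [us4] at this; split_ifs at this <;> omega
    · intro h
      have : us4 j c.1 = j+1+1 := congrArg Prod.fst h
      simp only [us4] at this; split_ifs at this <;> omega
    · intro h
      have : us4 j c.2 = j+5 := congrArg Prod.snd h
      simp only [us4] at this; split_ifs at this <;> omega
    · exact (hid c).symm

theorem key2' (k s u₁ u₂ : ℕ) (hk : 2 < k) :
    (Lset k (s+2) u₁ (u₂+1)).card =
      (Rset k (s+1) (u₁+1) u₂).card + (Rset k s (u₁+1) u₂).card := by
  classical
  set L := Lset k (s+2) u₁ (u₂+1) with hL
  have hsplit := Finset.card_filter_add_card_filter_not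
    (s := L) (p := fun x => (x.2.1.1 - 1, x.2.1.1 + 4) ∉ x.1)
  rw [← hsplit]
  congr 1
  -- case 1 : no spanning arc
  · apply Finset.card_nbij' col1 exp1
    · intro x hx
      rw [Finset.mem_coe, Finset.mem_filter] at hx
      obtain ⟨hxL, hγ⟩ := hx
      rw [hL, Lset, Finset.mem_sigma] at hxL
      obtain ⟨hA, hp⟩ := hxL
      obtain ⟨e1, e2, hα, hβ⟩ := marker_eq hp
      have hmem := col1_mem hk hA hα hβ hγ
      rw [Finset.mem_coe, Rset, Finset.mem_sigma]
      exact ⟨hmem, Finset.mem_filter.2 ⟨mem_B1.2 (Or.inl rfl), rfl⟩⟩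
    · intro y hy
      rw [Finset.mem_coe, Rset, Finset.mem_sigma] at hy
      obtain ⟨hB, hb⟩ := hy
      rw [Finset.mem_filter] at hb
      obtain ⟨hbB, hb1⟩ := hb
      have hb2 : y.2 = (y.2.1, y.2.1+1) := Prod.ext_iff.2 ⟨rfl, hb1⟩
      have h1arc : (y.2.1, y.2.1+1) ∈ y.1 := hb2 ▸ hbB
      obtain ⟨hmem, hmark, hnospan⟩ := exp1_mem hk hB h1arc
      rw [Finset.mem_coe, Finset.mem_filter, hL, Lset, Finset.mem_sigma]
      exact ⟨⟨hmem, hmark⟩, hnospan⟩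
    · intro x hx
      rw [Finset.mem_coe, Finset.mem_filter] at hx
      obtain ⟨hxL, hγ⟩ := hx
      rw [hL, Lset, Finset.mem_sigma] at hxL
      obtain ⟨hA, hp⟩ := hxL
      obtain ⟨e1, e2, hα, hβ⟩ := marker_eq hp
      have hdA0 : IsDiagram (2*(s+2)) x.1 := (mem_ShapeF.1 hA).1.1.1
      show (⟨A1 (B1 x.1 x.2.1.1) x.2.1.1,
        ((x.2.1.1, x.2.1.1+2), (x.2.1.1+1, x.2.1.1+3))⟩ :
        Σ _ : Finset (ℕ×ℕ), (ℕ×ℕ)×(ℕ×ℕ)) = x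
      rw [A1_B1 hdA0 hα hβ,
        show ((x.2.1.1, x.2.1.1+2), (x.2.1.1+1, x.2.1.1+3)) = x.2 from
          Prod.ext_iff.2 ⟨e1.symm, e2.symm⟩]
    · intro y hy
      rw [Finset.mem_coe, Rset, Finset.mem_sigma] at hy
      obtain ⟨hB, hb⟩ := hy
      rw [Finset.mem_filter] at hb
      obtain ⟨hbB, hb1⟩ := hb
      have hb2 : y.2 = (y.2.1, y.2.1+1) := Prod.ext_iff.2 ⟨rfl, hb1⟩
      have h1arc : (y.2.1, y.2.1+1) ∈ y.1 := hb2 ▸ hbB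
      have hdB0 : IsDiagram (2*(s+1)) y.1 := (mem_ShapeF.1 hB).1.1.1
      show (⟨B1 (A1 y.1 y.2.1) y.2.1, (y.2.1, y.2.1+1)⟩ :
        Σ _ : Finset (ℕ×ℕ), ℕ×ℕ) = y
      rw [B1_A1 hdB0 h1arc, show (y.2.1, y.2.1+1) = y.2 from hb2.symm]
  -- case 2 : spanning arc present
  · apply Finset.card_nbij' col2 exp2
    · intro x hx
      rw [Finset.mem_coe, Finset.mem_filter, not_not] at hx
      obtain ⟨hxL, hγ⟩ := hx
      rw [hL, Lset, Finset.mem_sigma] at hxL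
      obtain ⟨hA, hp⟩ := hxL
      obtain ⟨e1, e2, hα, hβ⟩ := marker_eq hp
      have hmem := col2_mem hk hA hα hβ hγ
      have hi1 : 1 ≤ x.2.1.1 - 1 :=
        ((mem_ShapeF.1 hA).1.1.1.1 _ hγ).1
      rw [Finset.mem_coe, Rset, Finset.mem_sigma]
      refine ⟨hmem, Finset.mem_filter.2 ⟨mem_B2.2 (Or.inl rfl), ?_⟩⟩
      show x.2.1.1 = x.2.1.1 - 1 + 1
      omega
    · intro y hy
      rw [Finset.mem_coe, Rset, Finset.mem_sigma] at hy
      obtain ⟨hB, hb⟩ := hy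
      rw [Finset.mem_filter] at hb
      obtain ⟨hbB, hb1⟩ := hb
      have hb2 : y.2 = (y.2.1, y.2.1+1) := Prod.ext_iff.2 ⟨rfl, hb1⟩
      have h1arc : (y.2.1, y.2.1+1) ∈ y.1 := hb2 ▸ hbB
      obtain ⟨hmem, hmark, hspan⟩ := exp2_mem hk hB h1arc
      rw [Finset.mem_coe, Finset.mem_filter, hL, Lset, Finset.mem_sigma, not_not]
      refine ⟨⟨hmem, hmark⟩, ?_⟩
      show ((y.2.1+1) - 1, (y.2.1+1) + 4) ∈ A2 y.1 y.2.1
      have : ((y.2.1+1) - 1, (y.2.1+1) + 4) = (y.2.1, y.2.1+5) :=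
        Prod.ext_iff.2 ⟨by omega, by omega⟩
      rw [this]
      exact hspan
    · intro x hx
      rw [Finset.mem_coe, Finset.mem_filter, not_not] at hx
      obtain ⟨hxL, hγ⟩ := hx
      rw [hL, Lset, Finset.mem_sigma] at hxL
      obtain ⟨hA, hp⟩ := hxL
      obtain ⟨e1, e2, hα, hβ⟩ := marker_eq hp
      have hdA0 : IsDiagram (2*(s+2)) x.1 := (mem_ShapeF.1 hA).1.1.1
      have hi1 : 1 ≤ x.2.1.1 - 1 := (hdA0.1 _ hγ).1
      show (⟨A2 (B2 x.1 x.2.1.1) (x.2.1.1 - 1),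
        ((x.2.1.1-1+1, x.2.1.1-1+3), (x.2.1.1-1+2, x.2.1.1-1+4))⟩ :
        Σ _ : Finset (ℕ×ℕ), (ℕ×ℕ)×(ℕ×ℕ)) = x
      have hm : ((x.2.1.1-1+1, x.2.1.1-1+3), (x.2.1.1-1+2, x.2.1.1-1+4)) = x.2 := by
        refine Prod.ext_iff.2 ⟨?_, ?_⟩
        · rw [e1]
          exact Prod.ext_iff.2 ⟨show x.2.1.1-1+1 = x.2.1.1 by omega,
            show x.2.1.1-1+3 = x.2.1.1+2 by omega⟩
        · rw [e2]
          exact Prod.ext_iff.2 ⟨show x.2.1.1-1+2 = x.2.1.1+1 by omega,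
            show x.2.1.1-1+4 = x.2.1.1+3 by omega⟩
      rw [A2_B2 hdA0 hα hβ hγ, hm]
    · intro y hy
      rw [Finset.mem_coe, Rset, Finset.mem_sigma] at hy
      obtain ⟨hB, hb⟩ := hy
      rw [Finset.mem_filter] at hb
      obtain ⟨hbB, hb1⟩ := hb
      have hb2 : y.2 = (y.2.1, y.2.1+1) := Prod.ext_iff.2 ⟨rfl, hb1⟩
      have h1arc : (y.2.1, y.2.1+1) ∈ y.1 := hb2 ▸ hbB
      have hdB0 : IsDiagram (2*s) y.1 := (mem_ShapeF.1 hB).1.1.1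
      have hb1' : y.2.2 = y.2.1 + 1 := hb1
      show (⟨B2 (A2 y.1 y.2.1) (y.2.1+1), (y.2.1+1-1, y.2.1+1)⟩ :
        Σ _ : Finset (ℕ×ℕ), ℕ×ℕ) = y
      rw [B2_A2 hdB0 h1arc,
        show (y.2.1+1-1, y.2.1+1) = y.2 from
          Prod.ext_iff.2 ⟨show y.2.1+1-1 = y.2.1 by omega,
            show y.2.1+1 = y.2.2 by omega⟩]

theorem key2 (k s u₁ u₂ : ℕ) (hk : 2 < k) :
    (Lset k (s+2) u₁ (u₂+1)).card =
      (Rset k (s+1) (u₁+1) u₂).card + (Rset k s (u₁+1) u₂).card :=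
  key2' k s u₁ u₂ hk

lemma ik3_zero_left (k u₁ u₂ : ℕ) : ik3 k 0 (u₁+1) u₂ = 0 := by
  rw [ik3_eq_card, Finset.card_eq_zero, Finset.eq_empty_iff_forall_notMem]
  intro A hA
  obtain ⟨hsh, hcard, hc1, hc2⟩ := mem_ShapeF.1 hA
  have hemp : A = ∅ := by
    rw [Finset.eq_empty_iff_forall_notMem]
    intro a ha
    have := hsh.1.1.1 a ha
    omega
  rw [hemp] at hc1
  simp [countC1] at hc1

lemma ik3_cross_small (k s u₁ u₂ : ℕ) (hs : s ≤ 1) : ik3 k s u₁ (u₂+1) = 0 := by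
  rw [ik3_eq_card, Finset.card_eq_zero, Finset.eq_empty_iff_forall_notMem]
  intro A hA
  obtain ⟨hsh, hcard, hc1, hc2⟩ := mem_ShapeF.1 hA
  have := countC2_eq_zero (show A.card ≤ 1 by omega)
  omega

lemma ik3_one_cross (k u₁ u₂ : ℕ) : ik3 k 1 u₁ (u₂+1) = 0 :=
  ik3_cross_small k 1 u₁ u₂ (by omega)

lemma ik3_zero_cross (k u₁ u₂ : ℕ) : ik3 k 0 u₁ (u₂+1) = 0 :=
  ik3_cross_small k 0 u₁ u₂ (by omega)

theorem key (k : ℕ) (hk : 2 < k) (s u₁ u₂ : ℕ) :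
    (u₂+1) * ik3 k s u₁ (u₂+1) =
      (u₁+1) * ik3 k (s-1) (u₁+1) u₂ + (u₁+1) * ik3 k (s-2) (u₁+1) u₂ := by
  match s with
  | 0 => simp [ik3_zero_cross, ik3_zero_left]
  | 1 => simp [ik3_one_cross, ik3_zero_left]
  | (s+2) =>
    have h := key2 k s u₁ u₂ hk
    rw [Lset_card, Rset_card, Rset_card] at h
    have : s + 2 - 1 = s + 1 := rfl
    rw [this, show s + 2 - 2 = s from rfl]
    rw [mul_comm ((u₂:ℕ)+1), h, mul_comm (ik3 k (s+1) (u₁+1) u₂), mul_comm (ik3 k s (u₁+1) u₂)]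

/-- For `k > 2`, the trivariate generating function
`W_k(x,y,w) = ∑ i_k(s,u₁,u₂) x^s y^{u₁} w^{u₂}` satisfies the formal PDE
`∂W_k/∂w = (x + x²) · ∂W_k/∂y`. -/
theorem shapes_pde (k : ℕ) (hk : 2 < k) :
    mvDeriv (2 : Fin 3)
        ((fun d : Fin 3 →₀ ℕ => (ik3 k (d 0) (d 1) (d 2) : ℚ)) :
          MvPowerSeries (Fin 3) ℚ) =
      (MvPowerSeries.X 0 + MvPowerSeries.X 0 ^ 2) *
        mvDeriv (1 : Fin 3)
          ((fun d : Fin 3 →₀ ℕ => (ik3 k (d 0) (d 1) (d 2) : ℚ)) :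
            MvPowerSeries (Fin 3) ℚ) := by
  ext d
  have hco : ∀ e : Fin 3 →₀ ℕ, MvPowerSeries.coeff e
      ((fun d : Fin 3 →₀ ℕ => (ik3 k (d 0) (d 1) (d 2) : ℚ)) :
          MvPowerSeries (Fin 3) ℚ) = (ik3 k (e 0) (e 1) (e 2) : ℚ) := fun e => rfl
  show mvDeriv 2 _ d = MvPowerSeries.coeff d _
  rw [add_mul, map_add]
  have hX : (MvPowerSeries.X 0 : MvPowerSeries (Fin 3) ℚ) =
      MvPowerSeries.monomial (Finsupp.single 0 1) 1 := by
    rw [← pow_one (MvPowerSeries.X (0:Fin 3)), MvPowerSeries.X_pow_eq]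
  have hX2 : (MvPowerSeries.X 0 ^ 2 : MvPowerSeries (Fin 3) ℚ) =
      MvPowerSeries.monomial (Finsupp.single 0 2) 1 := MvPowerSeries.X_pow_eq 0 2
  rw [hX2, hX, MvPowerSeries.coeff_monomial_mul, MvPowerSeries.coeff_monomial_mul]
  have hD : ∀ e : Fin 3 →₀ ℕ, MvPowerSeries.coeff e (mvDeriv (1 : Fin 3)
      ((fun d : Fin 3 →₀ ℕ => (ik3 k (d 0) (d 1) (d 2) : ℚ)) :
          MvPowerSeries (Fin 3) ℚ)) =
      ((e 1 : ℚ) + 1) * (ik3 k (e 0) (e 1 + 1) (e 2) : ℚ) := by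
    intro e
    show ((e 1 : ℚ) + 1) * _ = _
    rw [hco]
    simp [Finsupp.add_apply, Finsupp.single_apply]
  have hL : mvDeriv (2 : Fin 3)
      ((fun d : Fin 3 →₀ ℕ => (ik3 k (d 0) (d 1) (d 2) : ℚ)) :
          MvPowerSeries (Fin 3) ℚ) d =
      ((d 2 : ℚ) + 1) * (ik3 k (d 0) (d 1) (d 2 + 1) : ℚ) := by
    show ((d 2 : ℚ) + 1) * _ = _
    rw [hco]
    simp [Finsupp.add_apply, Finsupp.single_apply]
  rw [hL, hD, hD]
  have hle1 : (Finsupp.single (0 : Fin 3) 1 ≤ d) ↔ 1 ≤ d 0 := Finsupp.single_le_iff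
  have hle2 : (Finsupp.single (0 : Fin 3) 2 ≤ d) ↔ 2 ≤ d 0 := Finsupp.single_le_iff
  have hsub : ∀ m : ℕ, ∀ j : Fin 3, (d - Finsupp.single (0:Fin 3) m) j
      = d j - Finsupp.single (0:Fin 3) m j := fun m j => Finsupp.tsub_apply d _ j
  have e1 : ∀ m : ℕ, (d - Finsupp.single (0:Fin 3) m) 1 = d 1 := by
    intro m; rw [hsub]; simp [Finsupp.single_apply]
  have e2 : ∀ m : ℕ, (d - Finsupp.single (0:Fin 3) m) 2 = d 2 := by
    intro m; rw [hsub]; simp [Finsupp.single_apply]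
  have e0 : ∀ m : ℕ, (d - Finsupp.single (0:Fin 3) m) 0 = d 0 - m := by
    intro m; rw [hsub]; simp [Finsupp.single_apply]
  have hkey := key k hk (d 0) (d 1) (d 2)
  rcases Nat.lt_or_ge (d 0) 1 with h0 | h0
  · rw [if_neg (by rw [hle1]; omega), if_neg (by rw [hle2]; omega)]
    have hd0 : d 0 = 0 := by omega
    have hkey0 : (d 2 + 1) * ik3 k 0 (d 1) (d 2 + 1) = 0 := by
      have h := key k hk 0 (d 1) (d 2)
      simpa [ik3_zero_left] using h
    have h1 : ik3 k 0 (d 1) (d 2 + 1) = 0 := by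
      rcases Nat.mul_eq_zero.1 hkey0 with h | h
      · omega
      · exact h
    rw [hd0, h1]; push_cast; ring
  rcases Nat.lt_or_ge (d 0) 2 with h1 | h1
  · rw [if_pos (hle1.2 (by omega)), if_neg (by rw [hle2]; omega)]
    rw [e0, e1, e2]
    have hd0 : d 0 = 1 := by omega
    have hkey1 : (d 2 + 1) * ik3 k 1 (d 1) (d 2 + 1) = 0 := by
      have h := key k hk 1 (d 1) (d 2)
      simpa [ik3_zero_left] using h
    have h1 : ik3 k 1 (d 1) (d 2 + 1) = 0 := by
      rcases Nat.mul_eq_zero.1 hkey1 with h | h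
      · omega
      · exact h
    rw [hd0, h1]
    have h2 : ik3 k (1 - 1) (d 1 + 1) (d 2) = 0 := ik3_zero_left k (d 1) (d 2)
    rw [h2]
    push_cast; ring
  · rw [if_pos (hle1.2 (by omega)), if_pos (hle2.2 (by omega)), e0, e1, e2, e0, e1, e2]
    have : ((d 2 : ℚ) + 1) * (ik3 k (d 0) (d 1) (d 2 + 1) : ℚ)
        = (((d 2 + 1) * ik3 k (d 0) (d 1) (d 2 + 1) : ℕ) : ℚ) := by push_cast; ring
    rw [this, hkey]
    push_cast; ring

end ModularDiagrams
end

section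
/- The generating function of modular noncrossing diagrams differs from the k > 2 formula evaluated at k = 2: as formal power series in z, ∑_{n≥0} Q_2(n) z^n ≠ ((1 − z² + z⁴)/q(z)) · F_2( z⁴(1 − z² − z⁴ + 2z⁶ − z⁸)/q(z)² ), where q(z) = 1 − z − z² + z³ + 2z⁴ + z⁶ − z⁸ + z¹⁰ − z¹². -/
open scoped Classical

namespace ModularDiagrams

open PowerSeries

/-! ### Auxiliary: decidable predicates and cardinality computations -/

def noCross (A : Finset (ℕ × ℕ)) : Prop :=
  ∀ a ∈ A, ∀ b ∈ A, ¬ (a.1 < b.1 ∧ b.1 < a.2 ∧ a.2 < b.2)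

def matchP (n : ℕ) (A : Finset (ℕ × ℕ)) : Prop :=
  ∀ v ∈ Finset.Icc 1 n, ∃ a ∈ A, v = a.1 ∨ v = a.2

instance : DecidablePred noCross := fun A => by unfold noCross; infer_instance
instance (n : ℕ) : DecidablePred (IsDiagram n) := fun A => by unfold IsDiagram; infer_instance
instance : DecidablePred IsModular := fun A => by unfold IsModular; infer_instance
instance (n : ℕ) : DecidablePred (matchP n) := fun A => by unfold matchP; infer_instance

lemma hasK2_iff (A : Finset (ℕ × ℕ)) :
    HasKCrossing 2 A ↔ ∃ a ∈ A, ∃ b ∈ A, a.1 < b.1 ∧ b.1 < a.2 ∧ a.2 < b.2 := by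
  constructor
  · rintro ⟨f, hf, h1, h2, h3⟩
    exact ⟨f 0, hf 0, f 1, hf 1, h1 0 1 (by decide), h3 1 0, h2 0 1 (by decide)⟩
  · rintro ⟨a, ha, b, hb, hab1, hab2, hab3⟩
    refine ⟨![a, b], ?_, ?_, ?_, ?_⟩
    · intro i; fin_cases i <;> simpa
    · intro i j hij; fin_cases i <;> fin_cases j <;> simp_all [Fin.lt_def] <;> omega
    · intro i j hij; fin_cases i <;> fin_cases j <;> simp_all [Fin.lt_def] <;> omega
    · intro i j; fin_cases i <;> fin_cases j <;> simp <;> omega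

lemma not_hasK2 (A : Finset (ℕ × ℕ)) : ¬ HasKCrossing 2 A ↔ noCross A :=
  ⟨fun h a ha b hb hc => h ((hasK2_iff A).mpr ⟨a, ha, b, hb, hc⟩),
   fun h hk => by obtain ⟨a, ha, b, hb, hc⟩ := (hasK2_iff A).mp hk; exact h a ha b hb hc⟩

lemma matchP_iff (n : ℕ) (A : Finset (ℕ × ℕ)) : IsMatchingOn n A ↔ matchP n A :=
  ⟨fun h v hv => by rw [Finset.mem_Icc] at hv; exact h v hv.1 hv.2,
   fun h v h1 h2 => h v (Finset.mem_Icc.mpr ⟨h1, h2⟩)⟩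

lemma nat_card_eq {P Q : Finset (ℕ × ℕ) → Prop} [DecidablePred Q] (U : Finset (ℕ × ℕ))
    (hPQ : ∀ A, P A ↔ Q A) (hU : ∀ A, Q A → A ⊆ U) :
    Nat.card {A : Finset (ℕ × ℕ) // P A} = (U.powerset.filter Q).card := by
  have e : {A : Finset (ℕ × ℕ) // P A} ≃ {A // A ∈ U.powerset.filter Q} :=
    Equiv.subtypeEquivRight (fun A => by
      rw [Finset.mem_filter, Finset.mem_powerset, hPQ]
      exact ⟨fun h => ⟨hU A h, h⟩, fun h => h.2⟩)
  rw [Nat.card_congr e, Nat.card_eq_fintype_card, Fintype.card_coe]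

def U8 : Finset (ℕ × ℕ) := (Finset.Icc 1 8 ×ˢ Finset.Icc 1 8).filter (fun a => a.1 + 4 ≤ a.2)

def UM (n : ℕ) : Finset (ℕ × ℕ) := (Finset.Icc 1 n ×ˢ Finset.Icc 1 n).filter (fun a => a.1 < a.2)

set_option maxRecDepth 40000 in
lemma hQ28 : Qk 2 8 = 4 := by
  have hiff : ∀ A, (IsKNoncrossing 2 8 A ∧ IsModular A) ↔
      (IsDiagram 8 A ∧ noCross A ∧ IsModular A) := by
    intro A
    constructor
    · rintro ⟨⟨hd, hnc⟩, hm⟩; exact ⟨hd, (not_hasK2 A).mp hnc, hm⟩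
    · rintro ⟨hd, hnc, hm⟩; exact ⟨⟨hd, (not_hasK2 A).mpr hnc⟩, hm⟩
  have hsub : ∀ A, (IsDiagram 8 A ∧ noCross A ∧ IsModular A) → A ⊆ U8 := by
    rintro A ⟨hd, -, hm⟩ a ha
    have h1 := hd.1 a ha
    have h2 := (hm a ha).1
    simp only [U8, Finset.mem_filter, Finset.mem_product, Finset.mem_Icc]
    omega
  rw [Qk, nat_card_eq U8 hiff hsub]
  decide

set_option maxRecDepth 40000 in
lemma hfk0 : fk 2 0 = 1 := by
  have hiff : ∀ A, (IsKNoncrossing 2 (2 * 0) A ∧ IsMatchingOn (2 * 0) A) ↔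
      (IsDiagram (2 * 0) A ∧ noCross A ∧ matchP 0 A) := by
    intro A
    constructor
    · rintro ⟨⟨hd, hnc⟩, hm⟩
      exact ⟨hd, (not_hasK2 A).mp hnc, (matchP_iff 0 A).mp hm⟩
    · rintro ⟨hd, hnc, hm⟩
      exact ⟨⟨hd, (not_hasK2 A).mpr hnc⟩, (matchP_iff 0 A).mpr hm⟩
  have hsub : ∀ A, (IsDiagram (2 * 0) A ∧ noCross A ∧ matchP 0 A) → A ⊆ UM 0 := by
    rintro A ⟨hd, -, -⟩ a ha
    have h1 := hd.1 a ha
    simp only [UM, Finset.mem_filter, Finset.mem_product, Finset.mem_Icc]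
    omega
  rw [fk, nat_card_eq (UM 0) hiff hsub]
  decide

set_option maxRecDepth 40000 in
lemma hfk1 : fk 2 1 = 1 := by
  have hiff : ∀ A, (IsKNoncrossing 2 (2 * 1) A ∧ IsMatchingOn (2 * 1) A) ↔
      (IsDiagram (2 * 1) A ∧ noCross A ∧ matchP 2 A) := by
    intro A
    constructor
    · rintro ⟨⟨hd, hnc⟩, hm⟩
      exact ⟨hd, (not_hasK2 A).mp hnc, (matchP_iff 2 A).mp hm⟩
    · rintro ⟨hd, hnc, hm⟩
      exact ⟨⟨hd, (not_hasK2 A).mpr hnc⟩, (matchP_iff 2 A).mpr hm⟩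
  have hsub : ∀ A, (IsDiagram (2 * 1) A ∧ noCross A ∧ matchP 2 A) → A ⊆ UM 2 := by
    rintro A ⟨hd, -, -⟩ a ha
    have h1 := hd.1 a ha
    simp only [UM, Finset.mem_filter, Finset.mem_product, Finset.mem_Icc]
    omega
  rw [fk, nat_card_eq (UM 2) hiff hsub]
  decide

set_option maxRecDepth 40000 in
lemma hfk2 : fk 2 2 = 2 := by
  have hiff : ∀ A, (IsKNoncrossing 2 (2 * 2) A ∧ IsMatchingOn (2 * 2) A) ↔
      (IsDiagram (2 * 2) A ∧ noCross A ∧ matchP 4 A) := by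
    intro A
    constructor
    · rintro ⟨⟨hd, hnc⟩, hm⟩
      exact ⟨hd, (not_hasK2 A).mp hnc, (matchP_iff 4 A).mp hm⟩
    · rintro ⟨hd, hnc, hm⟩
      exact ⟨⟨hd, (not_hasK2 A).mpr hnc⟩, (matchP_iff 4 A).mpr hm⟩
  have hsub : ∀ A, (IsDiagram (2 * 2) A ∧ noCross A ∧ matchP 4 A) → A ⊆ UM 4 := by
    rintro A ⟨hd, -, -⟩ a ha
    have h1 := hd.1 a ha
    simp only [UM, Finset.mem_filter, Finset.mem_product, Finset.mem_Icc]
    omega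
  rw [fk, nat_card_eq (UM 4) hiff hsub]
  decide



noncomputable def qS : PowerSeries ℚ :=
  1 - X - X ^ 2 + X ^ 3 + 2 * X ^ 4 + X ^ 6 - X ^ 8 + X ^ 10 - X ^ 12

noncomputable def AS : PowerSeries ℚ := 1 - X ^ 2 + X ^ 4

noncomputable def gS : PowerSeries ℚ :=
  X ^ 4 * (1 - X ^ 2 - X ^ 4 + 2 * X ^ 6 - X ^ 8) * (qS⁻¹) ^ 2

noncomputable def uS : PowerSeries ℚ := X ^ 4 - X ^ 6 - X ^ 8 + 2 * X ^ 10 - X ^ 12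

lemma coeff_mul' (f g : PowerSeries ℚ) (n : ℕ) :
    coeff n (f * g) = ∑ k ∈ Finset.range (n + 1), coeff k f * coeff (n - k) g := by
  rw [PowerSeries.coeff_mul, Finset.Nat.sum_antidiagonal_eq_sum_range_succ_mk]

lemma hgu : gS = uS * (qS⁻¹ * qS⁻¹) := by
  unfold gS uS; ring

lemma gpow_zero (m n : ℕ) (h : n < 4 * m) : coeff n (gS ^ m) = 0 := by
  have h1 : gS ^ m = (X : PowerSeries ℚ) ^ (4 * m) *
      (((1 - X ^ 2 - X ^ 4 + 2 * X ^ 6 - X ^ 8) * (qS⁻¹) ^ 2) ^ m) := by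
    rw [gS, mul_assoc, mul_pow, ← pow_mul]
  exact PowerSeries.X_pow_dvd_iff.mp ⟨_, h1⟩ n h

lemma hq0 : coeff 0 qS = 1 := by
  norm_num [qS, two_mul, PowerSeries.coeff_one, PowerSeries.coeff_X, PowerSeries.coeff_X_pow]

lemma hq1 : coeff 1 qS = (-1 : ℚ) := by
  norm_num [qS, two_mul, PowerSeries.coeff_one, PowerSeries.coeff_X, PowerSeries.coeff_X_pow]

lemma hq2 : coeff 2 qS = (-1 : ℚ) := by
  norm_num [qS, two_mul, PowerSeries.coeff_one, PowerSeries.coeff_X, PowerSeries.coeff_X_pow]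

lemma hq3 : coeff 3 qS = 1 := by
  norm_num [qS, two_mul, PowerSeries.coeff_one, PowerSeries.coeff_X, PowerSeries.coeff_X_pow]

lemma hq4 : coeff 4 qS = 2 := by
  norm_num [qS, two_mul, PowerSeries.coeff_one, PowerSeries.coeff_X, PowerSeries.coeff_X_pow]

lemma hq5 : coeff 5 qS = 0 := by
  norm_num [qS, two_mul, PowerSeries.coeff_one, PowerSeries.coeff_X, PowerSeries.coeff_X_pow]

lemma hq6 : coeff 6 qS = 1 := by
  norm_num [qS, two_mul, PowerSeries.coeff_one, PowerSeries.coeff_X, PowerSeries.coeff_X_pow]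

lemma hq7 : coeff 7 qS = 0 := by
  norm_num [qS, two_mul, PowerSeries.coeff_one, PowerSeries.coeff_X, PowerSeries.coeff_X_pow]

lemma hq8 : coeff 8 qS = (-1 : ℚ) := by
  norm_num [qS, two_mul, PowerSeries.coeff_one, PowerSeries.coeff_X, PowerSeries.coeff_X_pow]

lemma hcq : PowerSeries.constantCoeff qS = 1 := by
  have := hq0
  rwa [PowerSeries.coeff_zero_eq_constantCoeff] at this

lemma hinv : qS * qS⁻¹ = 1 :=
  PowerSeries.mul_inv_cancel _ (by rw [hcq]; norm_num)

lemma hb0 : coeff 0 qS⁻¹ = 1 := by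
  rw [PowerSeries.coeff_zero_eq_constantCoeff, PowerSeries.constantCoeff_inv, hcq]
  norm_num

lemma hb1 : coeff 1 qS⁻¹ = 1 := by
  have e := congrArg (⇑(coeff 1)) hinv
  rw [coeff_mul'] at e
  norm_num [Finset.sum_range_succ, hcq, PowerSeries.constantCoeff_inv, hq0, hq1, hb0, PowerSeries.coeff_one] at e
  linarith

lemma hb2 : coeff 2 qS⁻¹ = 2 := by
  have e := congrArg (⇑(coeff 2)) hinv
  rw [coeff_mul'] at e
  norm_num [Finset.sum_range_succ, hcq, PowerSeries.constantCoeff_inv, hq0, hq1, hq2, hb0, hb1, PowerSeries.coeff_one] at e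
  linarith

lemma hb3 : coeff 3 qS⁻¹ = 2 := by
  have e := congrArg (⇑(coeff 3)) hinv
  rw [coeff_mul'] at e
  norm_num [Finset.sum_range_succ, hcq, PowerSeries.constantCoeff_inv, hq0, hq1, hq2, hq3, hb0, hb1, hb2, PowerSeries.coeff_one] at e
  linarith

lemma hb4 : coeff 4 qS⁻¹ = 1 := by
  have e := congrArg (⇑(coeff 4)) hinv
  rw [coeff_mul'] at e
  norm_num [Finset.sum_range_succ, hcq, PowerSeries.constantCoeff_inv, hq0, hq1, hq2, hq3, hq4, hb0, hb1, hb2, hb3, PowerSeries.coeff_one] at e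
  linarith

lemma hb5 : coeff 5 qS⁻¹ = (-1 : ℚ) := by
  have e := congrArg (⇑(coeff 5)) hinv
  rw [coeff_mul'] at e
  norm_num [Finset.sum_range_succ, hcq, PowerSeries.constantCoeff_inv, hq0, hq1, hq2, hq3, hq4, hq5, hb0, hb1, hb2, hb3, hb4, PowerSeries.coeff_one] at e
  linarith

lemma hb6 : coeff 6 qS⁻¹ = (-7 : ℚ) := by
  have e := congrArg (⇑(coeff 6)) hinv
  rw [coeff_mul'] at e
  norm_num [Finset.sum_range_succ, hcq, PowerSeries.constantCoeff_inv, hq0, hq1, hq2, hq3, hq4, hq5, hq6, hb0, hb1, hb2, hb3, hb4, hb5, PowerSeries.coeff_one] at e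
  linarith

lemma hb7 : coeff 7 qS⁻¹ = (-14 : ℚ) := by
  have e := congrArg (⇑(coeff 7)) hinv
  rw [coeff_mul'] at e
  norm_num [Finset.sum_range_succ, hcq, PowerSeries.constantCoeff_inv, hq0, hq1, hq2, hq3, hq4, hq5, hq6, hq7, hb0, hb1, hb2, hb3, hb4, hb5, hb6, PowerSeries.coeff_one] at e
  linarith

lemma hb8 : coeff 8 qS⁻¹ = (-23 : ℚ) := by
  have e := congrArg (⇑(coeff 8)) hinv
  rw [coeff_mul'] at e
  norm_num [Finset.sum_range_succ, hcq, PowerSeries.constantCoeff_inv, hq0, hq1, hq2, hq3, hq4, hq5, hq6, hq7, hq8, hb0, hb1, hb2, hb3, hb4, hb5, hb6, hb7, PowerSeries.coeff_one] at e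
  linarith

lemma hw0 : coeff 0 (qS⁻¹ * qS⁻¹) = 1 := by
  rw [coeff_mul']
  norm_num [Finset.sum_range_succ, hcq, PowerSeries.constantCoeff_inv, hb0]

lemma hw1 : coeff 1 (qS⁻¹ * qS⁻¹) = 2 := by
  rw [coeff_mul']
  norm_num [Finset.sum_range_succ, hcq, PowerSeries.constantCoeff_inv, hb0, hb1]

lemma hw2 : coeff 2 (qS⁻¹ * qS⁻¹) = 5 := by
  rw [coeff_mul']
  norm_num [Finset.sum_range_succ, hcq, PowerSeries.constantCoeff_inv, hb0, hb1, hb2]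

lemma hw3 : coeff 3 (qS⁻¹ * qS⁻¹) = 8 := by
  rw [coeff_mul']
  norm_num [Finset.sum_range_succ, hcq, PowerSeries.constantCoeff_inv, hb0, hb1, hb2, hb3]

lemma hw4 : coeff 4 (qS⁻¹ * qS⁻¹) = 10 := by
  rw [coeff_mul']
  norm_num [Finset.sum_range_succ, hcq, PowerSeries.constantCoeff_inv, hb0, hb1, hb2, hb3, hb4]

lemma hu0 : coeff 0 uS = 0 := by
  norm_num [uS, two_mul, PowerSeries.coeff_one, PowerSeries.coeff_X_pow]

lemma hu1 : coeff 1 uS = 0 := by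
  norm_num [uS, two_mul, PowerSeries.coeff_one, PowerSeries.coeff_X_pow]

lemma hu2 : coeff 2 uS = 0 := by
  norm_num [uS, two_mul, PowerSeries.coeff_one, PowerSeries.coeff_X_pow]

lemma hu3 : coeff 3 uS = 0 := by
  norm_num [uS, two_mul, PowerSeries.coeff_one, PowerSeries.coeff_X_pow]

lemma hu4 : coeff 4 uS = 1 := by
  norm_num [uS, two_mul, PowerSeries.coeff_one, PowerSeries.coeff_X_pow]

lemma hu5 : coeff 5 uS = 0 := by
  norm_num [uS, two_mul, PowerSeries.coeff_one, PowerSeries.coeff_X_pow]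

lemma hu6 : coeff 6 uS = (-1 : ℚ) := by
  norm_num [uS, two_mul, PowerSeries.coeff_one, PowerSeries.coeff_X_pow]

lemma hu7 : coeff 7 uS = 0 := by
  norm_num [uS, two_mul, PowerSeries.coeff_one, PowerSeries.coeff_X_pow]

lemma hu8 : coeff 8 uS = (-1 : ℚ) := by
  norm_num [uS, two_mul, PowerSeries.coeff_one, PowerSeries.coeff_X_pow]

lemma hg0 : coeff 0 gS = 0 := by
  rw [hgu, coeff_mul']
  norm_num [Finset.sum_range_succ, hcq, PowerSeries.constantCoeff_inv, hu0, hw0]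

lemma hg1 : coeff 1 gS = 0 := by
  rw [hgu, coeff_mul']
  norm_num [Finset.sum_range_succ, hcq, PowerSeries.constantCoeff_inv, hu0, hu1, hw0, hw1]

lemma hg2 : coeff 2 gS = 0 := by
  rw [hgu, coeff_mul']
  norm_num [Finset.sum_range_succ, hcq, PowerSeries.constantCoeff_inv, hu0, hu1, hu2, hw0, hw1, hw2]

lemma hg3 : coeff 3 gS = 0 := by
  rw [hgu, coeff_mul']
  norm_num [Finset.sum_range_succ, hcq, PowerSeries.constantCoeff_inv, hu0, hu1, hu2, hu3, hw0, hw1, hw2, hw3]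

lemma hg4 : coeff 4 gS = 1 := by
  rw [hgu, coeff_mul']
  norm_num [Finset.sum_range_succ, hcq, PowerSeries.constantCoeff_inv, hu0, hu1, hu2, hu3, hu4, hw0, hw1, hw2, hw3, hw4]

lemma hg5 : coeff 5 gS = 2 := by
  rw [hgu, coeff_mul']
  norm_num [Finset.sum_range_succ, hcq, PowerSeries.constantCoeff_inv, hu0, hu1, hu2, hu3, hu4, hu5, hw0, hw1, hw2, hw3, hw4]

lemma hg6 : coeff 6 gS = 4 := by
  rw [hgu, coeff_mul']
  norm_num [Finset.sum_range_succ, hcq, PowerSeries.constantCoeff_inv, hu0, hu1, hu2, hu3, hu4, hu5, hu6, hw0, hw1, hw2, hw3, hw4]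

lemma hg7 : coeff 7 gS = 6 := by
  rw [hgu, coeff_mul']
  norm_num [Finset.sum_range_succ, hcq, PowerSeries.constantCoeff_inv, hu0, hu1, hu2, hu3, hu4, hu5, hu6, hu7, hw0, hw1, hw2, hw3, hw4]

lemma hg8 : coeff 8 gS = 4 := by
  rw [hgu, coeff_mul']
  norm_num [Finset.sum_range_succ, hcq, PowerSeries.constantCoeff_inv, hu0, hu1, hu2, hu3, hu4, hu5, hu6, hu7, hu8, hw0, hw1, hw2, hw3, hw4]

lemma hgsq : coeff 8 (gS ^ 2) = 1 := by
  rw [pow_two, coeff_mul']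
  norm_num [Finset.sum_range_succ, hcq, PowerSeries.constantCoeff_inv, hg0, hg1, hg2, hg3, hg4, hg5, hg6, hg7, hg8]

lemma hA0 : coeff 0 AS = 1 := by
  norm_num [AS, PowerSeries.coeff_one, PowerSeries.coeff_X_pow]

lemma hA1 : coeff 1 AS = 0 := by
  norm_num [AS, PowerSeries.coeff_one, PowerSeries.coeff_X_pow]

lemma hA2 : coeff 2 AS = (-1 : ℚ) := by
  norm_num [AS, PowerSeries.coeff_one, PowerSeries.coeff_X_pow]

lemma hA3 : coeff 3 AS = 0 := by
  norm_num [AS, PowerSeries.coeff_one, PowerSeries.coeff_X_pow]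

lemma hA4 : coeff 4 AS = 1 := by
  norm_num [AS, PowerSeries.coeff_one, PowerSeries.coeff_X_pow]

lemma hA5 : coeff 5 AS = 0 := by
  norm_num [AS, PowerSeries.coeff_one, PowerSeries.coeff_X_pow]

lemma hA6 : coeff 6 AS = 0 := by
  norm_num [AS, PowerSeries.coeff_one, PowerSeries.coeff_X_pow]

lemma hA7 : coeff 7 AS = 0 := by
  norm_num [AS, PowerSeries.coeff_one, PowerSeries.coeff_X_pow]

lemma hA8 : coeff 8 AS = 0 := by
  norm_num [AS, PowerSeries.coeff_one, PowerSeries.coeff_X_pow]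

lemma hT0 : coeff 0 (AS * qS⁻¹) = 1 := by
  rw [coeff_mul']
  norm_num [Finset.sum_range_succ, hcq, PowerSeries.constantCoeff_inv, hA0, hb0]

lemma hT1 : coeff 1 (AS * qS⁻¹) = 1 := by
  rw [coeff_mul']
  norm_num [Finset.sum_range_succ, hcq, PowerSeries.constantCoeff_inv, hA0, hA1, hb0, hb1]

lemma hT2 : coeff 2 (AS * qS⁻¹) = 1 := by
  rw [coeff_mul']
  norm_num [Finset.sum_range_succ, hcq, PowerSeries.constantCoeff_inv, hA0, hA1, hA2, hb0, hb1, hb2]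

lemma hT3 : coeff 3 (AS * qS⁻¹) = 1 := by
  rw [coeff_mul']
  norm_num [Finset.sum_range_succ, hcq, PowerSeries.constantCoeff_inv, hA0, hA1, hA2, hA3, hb0, hb1, hb2, hb3]

lemma hT4 : coeff 4 (AS * qS⁻¹) = 0 := by
  rw [coeff_mul']
  norm_num [Finset.sum_range_succ, hcq, PowerSeries.constantCoeff_inv, hA0, hA1, hA2, hA3, hA4, hb0, hb1, hb2, hb3, hb4]

lemma hT5 : coeff 5 (AS * qS⁻¹) = (-2 : ℚ) := by
  rw [coeff_mul']
  norm_num [Finset.sum_range_succ, hcq, PowerSeries.constantCoeff_inv, hA0, hA1, hA2, hA3, hA4, hA5, hb0, hb1, hb2, hb3, hb4, hb5]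

lemma hT6 : coeff 6 (AS * qS⁻¹) = (-6 : ℚ) := by
  rw [coeff_mul']
  norm_num [Finset.sum_range_succ, hcq, PowerSeries.constantCoeff_inv, hA0, hA1, hA2, hA3, hA4, hA5, hA6, hb0, hb1, hb2, hb3, hb4, hb5, hb6]

lemma hT7 : coeff 7 (AS * qS⁻¹) = (-11 : ℚ) := by
  rw [coeff_mul']
  norm_num [Finset.sum_range_succ, hcq, PowerSeries.constantCoeff_inv, hA0, hA1, hA2, hA3, hA4, hA5, hA6, hA7, hb0, hb1, hb2, hb3, hb4, hb5, hb6, hb7]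

lemma hT8 : coeff 8 (AS * qS⁻¹) = (-15 : ℚ) := by
  rw [coeff_mul']
  norm_num [Finset.sum_range_succ, hcq, PowerSeries.constantCoeff_inv, hA0, hA1, hA2, hA3, hA4, hA5, hA6, hA7, hA8, hb0, hb1, hb2, hb3, hb4, hb5, hb6, hb7, hb8]

lemma hF0 : coeff 0 (FkComp 2 gS) = 1 := by
  simp only [FkComp, PowerSeries.coeff_mk]
  norm_num [Finset.sum_range_succ, hcq, PowerSeries.constantCoeff_inv, hfk0, hfk1, hfk2, PowerSeries.coeff_one, hq0]

lemma hF1 : coeff 1 (FkComp 2 gS) = 0 := by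
  simp only [FkComp, PowerSeries.coeff_mk]
  norm_num [Finset.sum_range_succ, hcq, PowerSeries.constantCoeff_inv, hfk0, hfk1, hfk2, PowerSeries.coeff_one, hg1]

lemma hF2 : coeff 2 (FkComp 2 gS) = 0 := by
  simp only [FkComp, PowerSeries.coeff_mk]
  norm_num [Finset.sum_range_succ, hcq, PowerSeries.constantCoeff_inv, hfk0, hfk1, hfk2, PowerSeries.coeff_one, hg2, gpow_zero 2 2 (by norm_num)]

lemma hF3 : coeff 3 (FkComp 2 gS) = 0 := by
  simp only [FkComp, PowerSeries.coeff_mk]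
  norm_num [Finset.sum_range_succ, hcq, PowerSeries.constantCoeff_inv, hfk0, hfk1, hfk2, PowerSeries.coeff_one, hg3, gpow_zero 2 3 (by norm_num), gpow_zero 3 3 (by norm_num)]

lemma hF4 : coeff 4 (FkComp 2 gS) = 1 := by
  simp only [FkComp, PowerSeries.coeff_mk]
  norm_num [Finset.sum_range_succ, hcq, PowerSeries.constantCoeff_inv, hfk0, hfk1, hfk2, PowerSeries.coeff_one, hg4, gpow_zero 2 4 (by norm_num), gpow_zero 3 4 (by norm_num), gpow_zero 4 4 (by norm_num)]

lemma hF5 : coeff 5 (FkComp 2 gS) = 2 := by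
  simp only [FkComp, PowerSeries.coeff_mk]
  norm_num [Finset.sum_range_succ, hcq, PowerSeries.constantCoeff_inv, hfk0, hfk1, hfk2, PowerSeries.coeff_one, hg5, gpow_zero 2 5 (by norm_num), gpow_zero 3 5 (by norm_num), gpow_zero 4 5 (by norm_num), gpow_zero 5 5 (by norm_num)]

lemma hF6 : coeff 6 (FkComp 2 gS) = 4 := by
  simp only [FkComp, PowerSeries.coeff_mk]
  norm_num [Finset.sum_range_succ, hcq, PowerSeries.constantCoeff_inv, hfk0, hfk1, hfk2, PowerSeries.coeff_one, hg6, gpow_zero 2 6 (by norm_num), gpow_zero 3 6 (by norm_num), gpow_zero 4 6 (by norm_num), gpow_zero 5 6 (by norm_num), gpow_zero 6 6 (by norm_num)]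

lemma hF7 : coeff 7 (FkComp 2 gS) = 6 := by
  simp only [FkComp, PowerSeries.coeff_mk]
  norm_num [Finset.sum_range_succ, hcq, PowerSeries.constantCoeff_inv, hfk0, hfk1, hfk2, PowerSeries.coeff_one, hg7, gpow_zero 2 7 (by norm_num), gpow_zero 3 7 (by norm_num), gpow_zero 4 7 (by norm_num), gpow_zero 5 7 (by norm_num), gpow_zero 6 7 (by norm_num), gpow_zero 7 7 (by norm_num)]

lemma hF8 : coeff 8 (FkComp 2 gS) = 6 := by
  simp only [FkComp, PowerSeries.coeff_mk]
  norm_num [Finset.sum_range_succ, hcq, PowerSeries.constantCoeff_inv, hfk0, hfk1, hfk2, PowerSeries.coeff_one, hg8, hgsq, gpow_zero 3 8 (by norm_num), gpow_zero 4 8 (by norm_num), gpow_zero 5 8 (by norm_num), gpow_zero 6 8 (by norm_num), gpow_zero 7 8 (by norm_num), gpow_zero 8 8 (by norm_num)]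

lemma key_s18 : coeff 8 (AS * qS⁻¹ * FkComp 2 gS) = 3 := by
  rw [coeff_mul']
  norm_num [Finset.sum_range_succ, hcq, PowerSeries.constantCoeff_inv, hT0, hT1, hT2, hT3, hT4, hT5, hT6, hT7, hT8,
    hF0, hF1, hF2, hF3, hF4, hF5, hF6, hF7, hF8]



/-- The generating function of modular noncrossing diagrams
differs from the `k > 2` formula evaluated at `k = 2`. -/
theorem modular_gf_two_ne :
    (PowerSeries.mk fun n => (Qk 2 n : ℚ)) ≠
      (1 - X ^ 2 + X ^ 4) *
        (1 - X - X ^ 2 + X ^ 3 + 2 * X ^ 4 + X ^ 6 - X ^ 8 + X ^ 10 - X ^ 12 :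
          PowerSeries ℚ)⁻¹ *
        FkComp 2
          (X ^ 4 * (1 - X ^ 2 - X ^ 4 + 2 * X ^ 6 - X ^ 8) *
            ((1 - X - X ^ 2 + X ^ 3 + 2 * X ^ 4 + X ^ 6 - X ^ 8 + X ^ 10 - X ^ 12 :
              PowerSeries ℚ)⁻¹) ^ 2) := by
  intro h
  have h8 : coeff 8 (PowerSeries.mk fun n => (Qk 2 n : ℚ)) =
      coeff 8 (AS * qS⁻¹ * FkComp 2 gS) := congrArg (⇑(coeff 8)) h
  rw [key_s18] at h8
  simp only [PowerSeries.coeff_mk] at h8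
  rw [hQ28] at h8
  norm_num at h8

end ModularDiagrams
end
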